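/- For any DL-Lite_core^bag ontology K and any bag model I of K, there exists an e-homomorphism from the enumerated canonical bag model C(K)^e to the enumerated interpretation I^e that is predicate-injective on individuals. -/

import Mathlib

/-!
Common formalization of the bag semantics of DL-Lite ontologies
(Nikolaou et al., "The Bag Semantics of Ontology-Based Data Access").
-/

open scoped Classical

noncomputable section

/-- Individuals (constants). -/
abbrev Ind : Type := ℕ
/-- Variables. -/
abbrev Var : Type := ℕ
/-- Atomic concepts (unary predicates). -/
abbrev AtomicConcept : Type := ℕ
/-- Atomic roles (binary predicates). -/
abbrev AtomicRole : Type := ℕ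

/-- A role is an atomic role or its inverse. -/
inductive Role where
  | atomic : AtomicRole → Role
  | inv : AtomicRole → Role
  deriving DecidableEq

/-- A concept is an atomic concept or `∃R` for a role `R`. -/
inductive DLConcept where
  | atomic : AtomicConcept → DLConcept
  | ex : Role → DLConcept
  deriving DecidableEq

/-- TBox axioms: inclusions and disjointness axioms between concepts or roles. -/
inductive TBoxAxiom where
  | cIncl : DLConcept → DLConcept → TBoxAxiom
  | rIncl : Role → Role → TBoxAxiom
  | cDisj : DLConcept → DLConcept → TBoxAxiom
  | rDisj : Role → Role → TBoxAxiom
  deriving DecidableEq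

/-- A DL-Lite_R TBox: a finite set of TBox axioms. -/
abbrev TBox : Type := Finset TBoxAxiom

/-- A DL-Lite_core TBox: only concept inclusions and concept disjointness axioms. -/
def TBox.IsCore (T : TBox) : Prop :=
  ∀ ax ∈ T, (∃ C D, ax = TBoxAxiom.cIncl C D) ∨ (∃ C D, ax = TBoxAxiom.cDisj C D)

/-- ABox assertions. -/
inductive Assertion where
  | conceptA : AtomicConcept → Ind → Assertion
  | roleA : AtomicRole → Ind → Ind → Assertion
  deriving DecidableEq

/-- A bag ABox: a finite bag of assertions (represented as a multiset). -/
abbrev BagABox : Type := Multiset Assertion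

/-- Multiplicity of an assertion in a bag ABox, as an extended natural. -/
def BagABox.mult (A : BagABox) (s : Assertion) : ℕ∞ := (A.count s : ℕ∞)

/-- Sum of an arbitrary family of extended naturals. -/
def bagSum {α : Type*} (f : α → ℕ∞) : ℕ∞ := ⨆ s : Finset α, ∑ x ∈ s, f x

/-- A bag interpretation. -/
structure BagInterp : Type 1 where
  Δ : Type
  dne : Nonempty Δ
  indMap : Ind → Δ
  indInj : Function.Injective indMap
  cI : AtomicConcept → Δ → ℕ∞
  rI : AtomicRole → Δ → Δ → ℕ∞

/-- Extension of the interpretation function to roles. -/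
def BagInterp.roleMult (I : BagInterp) : Role → I.Δ → I.Δ → ℕ∞
  | Role.atomic P => fun u v => I.rI P u v
  | Role.inv P => fun u v => I.rI P v u

/-- Extension of the interpretation function to concepts. -/
def BagInterp.conceptMult (I : BagInterp) : DLConcept → I.Δ → ℕ∞
  | DLConcept.atomic A => fun u => I.cI A u
  | DLConcept.ex R => fun u => bagSum (fun v => I.roleMult R u v)

/-- Multiplicity of an assertion in a bag interpretation. -/
def BagInterp.assertMult (I : BagInterp) : Assertion → ℕ∞
  | Assertion.conceptA A a => I.cI A (I.indMap a)
  | Assertion.roleA P a b => I.rI P (I.indMap a) (I.indMap b)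

/-- Satisfaction of a TBox axiom by a bag interpretation. -/
def BagInterp.SatisfiesAx (I : BagInterp) : TBoxAxiom → Prop
  | TBoxAxiom.cIncl C D => ∀ u, I.conceptMult C u ≤ I.conceptMult D u
  | TBoxAxiom.rIncl R S => ∀ u v, I.roleMult R u v ≤ I.roleMult S u v
  | TBoxAxiom.cDisj C D => ∀ u, min (I.conceptMult C u) (I.conceptMult D u) = 0
  | TBoxAxiom.rDisj R S => ∀ u v, min (I.roleMult R u v) (I.roleMult S u v) = 0

/-- A DL-Lite^bag ontology. -/
structure Ontology : Type where
  tbox : TBox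
  abox : BagABox

/-- `I` is a bag model of the ontology `K`. -/
def BagInterp.IsModel (I : BagInterp) (K : Ontology) : Prop :=
  (∀ ax ∈ K.tbox, I.SatisfiesAx ax) ∧
  ∀ s : Assertion, BagABox.mult K.abox s ≤ I.assertMult s

/-- Satisfiability of an ontology under bag semantics. -/
def Ontology.Satisfiable (K : Ontology) : Prop := ∃ I : BagInterp, I.IsModel K

/- ## Conjunctive queries -/

/-- Terms: variables or individuals. -/
inductive Term where
  | var : Var → Term
  | ind : Ind → Term
  deriving DecidableEq

def Term.varsOf : Term → List Var
  | Term.var v => [v]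
  | Term.ind _ => []

def Term.indsOf : Term → List Ind
  | Term.var _ => []
  | Term.ind a => [a]

/-- Query atoms: concept atoms, role atoms, and equalities. -/
inductive QAtom where
  | conceptAt : AtomicConcept → Term → QAtom
  | roleAt : AtomicRole → Term → Term → QAtom
  | eqAt : Var → Term → QAtom
  deriving DecidableEq

def QAtom.terms : QAtom → List Term
  | QAtom.conceptAt _ t => [t]
  | QAtom.roleAt _ t₁ t₂ => [t₁, t₂]
  | QAtom.eqAt z t => [Term.var z, t]

def QAtom.vars : QAtom → List Var
  | QAtom.conceptAt _ t => t.varsOf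
  | QAtom.roleAt _ t₁ t₂ => t₁.varsOf ++ t₂.varsOf
  | QAtom.eqAt z t => z :: t.varsOf

/-- A conjunctive query `q(x) = ∃y. φ(x,y)`: a tuple of answer variables,
a tuple of existential variables, and a conjunction (list, i.e. allowing
repetitions) of atoms. -/
structure CQ : Type where
  answerVars : List Var
  existVars : List Var
  atoms : List QAtom

def CQ.vars (q : CQ) : List Var := q.answerVars ++ q.existVars

/-- Value of a term under a valuation of the variables. -/
def termVal (I : BagInterp) (f : Var → I.Δ) : Term → I.Δ
  | Term.var v => f v
  | Term.ind a => I.indMap a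

/-- Multiplicity contributed by an atom under a valuation: for predicate atoms the
multiplicity of the image tuple, for equalities the indicator of satisfaction. -/
def QAtom.mult (I : BagInterp) (f : Var → I.Δ) : QAtom → ℕ∞
  | QAtom.conceptAt A t => I.cI A (termVal I f t)
  | QAtom.roleAt P t₁ t₂ => I.rI P (termVal I f t₁) (termVal I f t₂)
  | QAtom.eqAt z t => if f z = termVal I f t then 1 else 0

/-- The bag answers `q^I(ā)`: the sum, over all valuations of the variables of `q`
mapping the answer variables to `ā` (valuations are normalized to a fixed junk
value outside the variables of `q`), of the product of the multiplicities of the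
atom occurrences of `q`. -/
def CQ.bagAnswer (q : CQ) (I : BagInterp) (a : List Ind) : ℕ∞ :=
  bagSum (fun f : {f : Var → I.Δ //
      (∀ v, v ∉ q.vars → f v = I.indMap 0) ∧
      q.answerVars.map f = a.map I.indMap} =>
    (q.atoms.map (QAtom.mult I f.1)).prod)

/-- Bag certain answers: pointwise minimum over all bag models. -/
def bagCertain (K : Ontology) (q : CQ) (a : List Ind) : ℕ∞ :=
  ⨅ (I : BagInterp) (_ : I.IsModel K), q.bagAnswer I a

/-- Base relation of the equivalence relation generated by the equality atoms. -/
def CQ.eqBase (q : CQ) : Term → Term → Prop := fun t₁ t₂ =>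
  ∃ z t, QAtom.eqAt z t ∈ q.atoms ∧ t₁ = Term.var z ∧ t₂ = t

/-- Equivalence of terms generated by the equality atoms of `q`. -/
def CQ.eqRel (q : CQ) : Term → Term → Prop := Relation.EqvGen q.eqBase

/-- Safety: the class of every variable contains a term occurring in a
non-equality atom. -/
def CQ.Safe (q : CQ) : Prop :=
  ∀ v ∈ q.vars, ∃ t : Term, ∃ atm ∈ q.atoms,
    (∀ z s, atm ≠ QAtom.eqAt z s) ∧ t ∈ QAtom.terms atm ∧ q.eqRel (Term.var v) t

/-- Well-formedness of CQs: repetition-free disjoint tuples of variables, all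
variables of the atoms among the declared variables, and safety. -/
def CQ.WellFormed (q : CQ) : Prop :=
  q.answerVars.Nodup ∧ q.existVars.Nodup ∧
  (∀ v ∈ q.answerVars, v ∉ q.existVars) ∧
  (∀ atm ∈ q.atoms, ∀ v ∈ QAtom.vars atm, v ∈ q.vars) ∧
  q.Safe

def CQ.mentionsTerm (q : CQ) (t : Term) : Prop := ∃ atm ∈ q.atoms, t ∈ QAtom.terms atm

/-- Adjacency in the Gaifman graph of `q` (on terms; equality atoms merge the
classes of their two terms, which for connectivity purposes is the same as
making them adjacent). -/
def CQ.gaifmanAdj (q : CQ) : Term → Term → Prop := fun t₁ t₂ =>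
  ∃ atm ∈ q.atoms, t₁ ∈ QAtom.terms atm ∧ t₂ ∈ QAtom.terms atm

/-- A CQ is rooted if every connected component of its Gaifman graph contains
an answer variable or an individual. -/
def CQ.Rooted (q : CQ) : Prop :=
  ∀ t : Term, q.mentionsTerm t →
    ∃ t' : Term, Relation.ReflTransGen q.gaifmanAdj t t' ∧
      ((∃ v ∈ q.answerVars, t' = Term.var v) ∨ ∃ a : Ind, t' = Term.ind a)

/- ## Set semantics -/

/-- A classical (set) interpretation. -/
structure SetInterp : Type 1 where
  Δ : Type
  dne : Nonempty Δ
  indMap : Ind → Δ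
  indInj : Function.Injective indMap
  cI : AtomicConcept → Set Δ
  rI : AtomicRole → Set (Δ × Δ)

def SetInterp.roleSet (I : SetInterp) : Role → Set (I.Δ × I.Δ)
  | Role.atomic P => I.rI P
  | Role.inv P => {p | (p.2, p.1) ∈ I.rI P}

def SetInterp.conceptSet (I : SetInterp) : DLConcept → Set I.Δ
  | DLConcept.atomic A => I.cI A
  | DLConcept.ex R => {u | ∃ v, (u, v) ∈ I.roleSet R}

def SetInterp.SatisfiesAx (I : SetInterp) : TBoxAxiom → Prop
  | TBoxAxiom.cIncl C D => I.conceptSet C ⊆ I.conceptSet D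
  | TBoxAxiom.rIncl R S => I.roleSet R ⊆ I.roleSet S
  | TBoxAxiom.cDisj C D => I.conceptSet C ∩ I.conceptSet D = ∅
  | TBoxAxiom.rDisj R S => I.roleSet R ∩ I.roleSet S = ∅

def SetInterp.SatisfiesAssertion (I : SetInterp) : Assertion → Prop
  | Assertion.conceptA A a => I.indMap a ∈ I.cI A
  | Assertion.roleA P a b => (I.indMap a, I.indMap b) ∈ I.rI P

/-- `I` is a (set) model of the TBox `T` and the set ABox `A`. -/
def SetInterp.IsModelOf (I : SetInterp) (T : TBox) (A : Finset Assertion) : Prop :=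
  (∀ ax ∈ T, I.SatisfiesAx ax) ∧ ∀ s ∈ A, I.SatisfiesAssertion s

def setTermVal (I : SetInterp) (f : Var → I.Δ) : Term → I.Δ
  | Term.var v => f v
  | Term.ind a => I.indMap a

def SetInterp.SatAtom (I : SetInterp) (f : Var → I.Δ) : QAtom → Prop
  | QAtom.conceptAt A t => setTermVal I f t ∈ I.cI A
  | QAtom.roleAt P t₁ t₂ => (setTermVal I f t₁, setTermVal I f t₂) ∈ I.rI P
  | QAtom.eqAt z t => f z = setTermVal I f t

/-- `q(ā)` holds in the set interpretation `I`. -/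
def SetInterp.SatCQ (I : SetInterp) (q : CQ) (a : List Ind) : Prop :=
  ∃ f : Var → I.Δ, q.answerVars.map f = a.map I.indMap ∧ ∀ atm ∈ q.atoms, I.SatAtom f atm

/-- Entailment of a concept inclusion from a TBox (standard set semantics). -/
def TBox.EntailsCI (T : TBox) (C D : DLConcept) : Prop :=
  ∀ I : SetInterp, (∀ ax ∈ T, I.SatisfiesAx ax) → I.conceptSet C ⊆ I.conceptSet D

/- ## The canonical bag model -/

/-- Domain elements of the canonical model: individuals and anonymous elements
`w^j_{u,R}`. -/
inductive CanElem where
  | ind : Ind → CanElem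
  | anon : CanElem → Role → ℕ → CanElem
  deriving DecidableEq

def CanElem.isAnon : CanElem → Prop
  | CanElem.ind _ => False
  | CanElem.anon _ _ _ => True

/-- A stage of the canonical-model construction: a set of active elements and
bag interpretations of the predicates. -/
structure PreInterp : Type where
  active : Set CanElem
  c : AtomicConcept → CanElem → ℕ∞
  r : AtomicRole → CanElem → CanElem → ℕ∞

def PreInterp.toInterp (P : PreInterp) : BagInterp where
  Δ := CanElem
  dne := ⟨CanElem.ind 0⟩
  indMap := CanElem.ind
  indInj := fun a b h => by cases h; rfl
  cI := P.c
  rI := P.r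

/-- Concept closure: `ccl(u,I,T)(C)` is the supremum of `C₀^I(u)` over all
concepts `C₀` with `T ⊨ C₀ ⊑ C`. -/
def cclI (T : TBox) (I : BagInterp) (C : DLConcept) (u : I.Δ) : ℕ∞ :=
  ⨆ C₀ : {C₀ : DLConcept // TBox.EntailsCI T C₀ C}, I.conceptMult C₀.1 u

def PreInterp.ccl (P : PreInterp) (T : TBox) (u : CanElem) (C : DLConcept) : ℕ∞ :=
  cclI T P.toInterp C u

/-- `δ = ccl(u,C_{i-1},T)(∃R) − (∃R)^{C_{i-1}}(u)` (truncated subtraction). -/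
def PreInterp.delta (P : PreInterp) (T : TBox) (u : CanElem) (R : Role) : ℕ∞ :=
  P.ccl T u (DLConcept.ex R) - P.toInterp.conceptMult (DLConcept.ex R) u

/-- The anonymous elements freshly added when stepping from `P`. -/
def PreInterp.NewAnon (P : PreInterp) (T : TBox) (w : CanElem) : Prop :=
  ∃ u R j, w = CanElem.anon u R j ∧ u ∈ P.active ∧ (j : ℕ∞) < P.delta T u R

/-- One step of the canonical-model construction. -/
def PreInterp.step (P : PreInterp) (T : TBox) : PreInterp where
  active := P.active ∪ {w | P.NewAnon T w}
  c := fun A u => if u ∈ P.active then P.ccl T u (DLConcept.atomic A) else 0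
  r := fun P₀ u v =>
    if u ∈ P.active ∧ v ∈ P.active then P.r P₀ u v
    else if ∃ j, v = CanElem.anon u (Role.atomic P₀) j ∧ P.NewAnon T v then 1
    else if ∃ j, u = CanElem.anon v (Role.inv P₀) j ∧ P.NewAnon T u then 1
    else 0

/-- The stages `C_i(K)` of the canonical bag model. -/
def canStage (K : Ontology) : ℕ → PreInterp
  | 0 =>
    { active := Set.range CanElem.ind
      c := fun A u =>
        match u with
        | CanElem.ind a => BagABox.mult K.abox (Assertion.conceptA A a)
        | _ => 0
      r := fun P u v =>
        match u, v with
        | CanElem.ind a, CanElem.ind b => BagABox.mult K.abox (Assertion.roleA P a b)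
        | _, _ => 0 }
  | (i + 1) => (canStage K i).step K.tbox

/-- The canonical bag model `C(K) = ⋃_{i ≥ 0} C_i(K)` (pointwise maximum). -/
def canInterp (K : Ontology) : BagInterp where
  Δ := CanElem
  dne := ⟨CanElem.ind 0⟩
  indMap := CanElem.ind
  indInj := fun a b h => by cases h; rfl
  cI := fun A u => ⨆ i, (canStage K i).c A u
  rI := fun P u v => ⨆ i, (canStage K i).r P u v

/-- The canonical bag model `C(⟨∅,A⟩)` of the ontology with empty TBox:
individuals as domain, every predicate interpreted by its ABox bag. -/
def emptyCanInterp (A : BagABox) : BagInterp where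
  Δ := Ind
  dne := ⟨0⟩
  indMap := id
  indInj := fun _ _ h => h
  cI := fun C a => BagABox.mult A (Assertion.conceptA C a)
  rI := fun P a b => BagABox.mult A (Assertion.roleA P a b)

/-- `[q,z]^{C(K)}`: bag answers over the canonical model computed only over
valuations sending the variables of `z` to anonymous elements and the remaining
existential variables to individuals. -/
def CQ.restrictedAnswer (q : CQ) (K : Ontology) (z : Finset Var) (a : List Ind) : ℕ∞ :=
  bagSum (fun f : {f : Var → CanElem //
      (∀ v, v ∉ q.vars → f v = CanElem.ind 0) ∧
      q.answerVars.map f = a.map CanElem.ind ∧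
      ∀ v ∈ q.existVars, (v ∈ z → CanElem.isAnon (f v)) ∧ (v ∉ z → ∃ b : Ind, f v = CanElem.ind b)} =>
    (q.atoms.map (QAtom.mult (canInterp K) f.1)).prod)

/- ## Ma-connected subsets, realisability, and the per-`z` rewritten query -/

/-- `t` is a variable belonging to `z`. -/
def Term.IsZVar (t : Term) (z : Finset Var) : Prop := ∃ v ∈ z, t = Term.var v

/-- Adjacency in the Gaifman graph restricted to nodes that are variables of `z`. -/
def CQ.zAdj (q : CQ) (z : Finset Var) : Term → Term → Prop := fun t₁ t₂ =>
  q.gaifmanAdj t₁ t₂ ∧ t₁.IsZVar z ∧ t₂.IsZVar z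

/-- `z'` is maximally connected in the anonymous part (ma-connected) within `z`. -/
def CQ.MAConnected (q : CQ) (z z' : Finset Var) : Prop :=
  z' ⊆ z ∧
  (∀ v ∈ z', ∀ w ∈ z, Relation.ReflTransGen (q.zAdj z) (Term.var v) (Term.var w) → w ∈ z') ∧
  (∀ v ∈ z', ∀ w ∈ z', Relation.ReflTransGen (q.zAdj z) (Term.var v) (Term.var w))

/-- `φ_{z'}`: the subconjunction of all atoms of `q` mentioning a variable of `z'`. -/
def CQ.subAtoms (q : CQ) (z' : Finset Var) : List QAtom :=
  q.atoms.filter (fun atm => decide (∃ v ∈ z', v ∈ QAtom.vars atm))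

def termsOfList (l : List QAtom) : List Term :=
  l.foldr (fun atm acc => QAtom.terms atm ++ acc) []

/-- `t_{z'}`: all terms occurring in `φ_{z'}` that are not variables of `z`. -/
def CQ.tTerms (q : CQ) (z z' : Finset Var) : List Term :=
  (termsOfList (q.subAtoms z')).filter (fun t => decide (¬ t.IsZVar z))

/-- `atm` is a legitimate choice of `α_{z'}`: an atom of `φ_{z'}` of the form
`P(t,z)` or `P(z,t)` with `z ∈ z'` and the term `t` not a variable of `z`. -/
def IsAlphaFor (q : CQ) (z z' : Finset Var) (atm : QAtom) : Prop :=
  atm ∈ q.subAtoms z' ∧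
  ((∃ P t v, v ∈ z' ∧ ¬ Term.IsZVar t z ∧ atm = QAtom.roleAt P t (Term.var v)) ∨
   (∃ P t v, v ∈ z' ∧ ¬ Term.IsZVar t z ∧ atm = QAtom.roleAt P (Term.var v) t))

def CQ.inds (q : CQ) : List Ind :=
  (termsOfList q.atoms).foldr (fun t acc => t.indsOf ++ acc) []

def CQ.maxInd (q : CQ) : Ind := q.inds.foldr max 0

/-- The individual `a` of `q^a_{z'}`: the individual among `t_{z'}` if one
exists, and a fresh individual otherwise. -/
def freshA (q : CQ) (z z' : Finset Var) : Ind :=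
  if h : ∃ c : Ind, Term.ind c ∈ q.tTerms z z' then h.choose else q.maxInd + 1

/-- A fresh individual `b` (distinct from `freshA`). -/
def freshB (q : CQ) : Ind := q.maxInd + 2

/-- The one-assertion bag ABox `A'` used to test realisability: `{P(a,b)}` if
`α_{z'} = P(t,z)` and `{P(b,a)}` if `α_{z'} = P(z,t)`. -/
def alphaABox (z' : Finset Var) (atm : QAtom) (a b : Ind) : BagABox :=
  match atm with
  | QAtom.roleAt P _ t₂ =>
      if Term.IsZVar t₂ z' then {Assertion.roleA P a b} else {Assertion.roleA P b a}
  | _ => 0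

def subVars (q : CQ) (z' : Finset Var) : List Var :=
  (q.subAtoms z').foldr (fun atm acc => QAtom.vars atm ++ acc) []

/-- The bag answer `(q^a_{z'})^{C(⟨T,A'⟩)}(⟨⟩)` of the Boolean query
`q^a_{z'}() = ∃x'.∃z'. φ_{z'} ∧ ⋀_{t ∈ t_{z'}}(t = a) ∧ ⋀_{z ∈ z'}(z ≠ a)`
over the canonical model of `⟨T,A'⟩`. -/
def realQAnswer (T : TBox) (q : CQ) (z z' : Finset Var) (atm : QAtom) : ℕ∞ :=
  bagSum (fun f : {f : Var → CanElem //
      (∀ v, v ∉ subVars q z' → f v = CanElem.ind 0) ∧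
      (∀ t ∈ q.tTerms z z',
        termVal (canInterp ⟨T, alphaABox z' atm (freshA q z z') (freshB q)⟩) f t
          = CanElem.ind (freshA q z z')) ∧
      ∀ v ∈ z', f v ≠ CanElem.ind (freshA q z z')} =>
    ((q.subAtoms z').map
      (QAtom.mult (canInterp ⟨T, alphaABox z' atm (freshA q z z') (freshB q)⟩) f.1)).prod)

/-- Equality-consistency of `z`: no equality atom `z = t` with `z ∈ z` and `t ∉ z`. -/
def EqConsistent (q : CQ) (z : Finset Var) : Prop :=
  ∀ v t, QAtom.eqAt v t ∈ q.atoms → v ∈ z → Term.IsZVar t z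

/-- The ma-connected subset `z'` is realisable by `T` (w.r.t. the chosen `α_{z'}`). -/
def RealisableMA (T : TBox) (q : CQ) (z z' : Finset Var) (atm : QAtom) : Prop :=
  1 ≤ realQAnswer T q z z' atm

/-- `z` is realisable by `T`: equality-consistent and every nonempty
ma-connected subset of `z` is realisable. -/
def RealisableZ (T : TBox) (q : CQ) (z : Finset Var) (alpha : Finset Var → QAtom) : Prop :=
  EqConsistent q z ∧
  ∀ z' : Finset Var, q.MAConnected z z' → z'.Nonempty → RealisableMA T q z z' (alpha z')

/-- The nonempty ma-connected subsets of `z`. -/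
def maSets (q : CQ) (z : Finset Var) : Finset (Finset Var) :=
  z.powerset.filter (fun z' => q.MAConnected z z' ∧ z'.Nonempty)

def tTermVars (q : CQ) (z z' : Finset Var) : List Var :=
  (q.tTerms z z').foldr (fun t acc => Term.varsOf t ++ acc) []

/-- The equalities identifying all the terms of `t_{z'}`. -/
def eqAtomsFor (q : CQ) (z z' : Finset Var) : List QAtom :=
  (tTermVars q z z').foldr
    (fun v acc => ((q.tTerms z z').map (fun t => QAtom.eqAt v t)) ++ acc) []

/-- Atoms of `q_z`: the atoms of `q` not mentioning a variable of `z`, plus,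
for each nonempty ma-connected `z' ⊆ z`, the atom `α_{z'}` together with the
equalities identifying the terms of `t_{z'}`. -/
def qzAtoms (q : CQ) (z : Finset Var) (alpha : Finset Var → QAtom) : List QAtom :=
  q.atoms.filter (fun atm => decide (¬ ∃ v ∈ z, v ∈ QAtom.vars atm))
    ++ (maSets q z).toList.foldr (fun z' acc => alpha z' :: (eqAtomsFor q z z' ++ acc)) []

/-- The CQ `q_z(x) = ∃y'. φ_z(x,y')`. -/
def qz (q : CQ) (z : Finset Var) (alpha : Finset Var → QAtom) : CQ where
  answerVars := q.answerVars
  existVars := q.existVars.filter (fun v => decide (∃ atm ∈ qzAtoms q z alpha, v ∈ QAtom.vars atm))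
  atoms := qzAtoms q z alpha

/- ## The BALG rewriting `q̄` -/

/-- Value of an atom of `q_z` after the rewriting step 3 (`chasing back'' with
the TBox): concept atoms `A(t)` become `⋁_{T ⊨ C ⊑ A} ζ_C(t)`, role atoms with a
`z`-variable become the corresponding truncated difference, and the remaining
atoms are evaluated as before. -/
def rewAtomVal (T : TBox) (I : BagInterp) (z : Finset Var) (f : Var → I.Δ) : QAtom → ℕ∞
  | QAtom.conceptAt A t => cclI T I (DLConcept.atomic A) (termVal I f t)
  | QAtom.roleAt P t₁ t₂ =>
      if Term.IsZVar t₂ z then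
        cclI T I (DLConcept.ex (Role.atomic P)) (termVal I f t₁)
          - I.conceptMult (DLConcept.ex (Role.atomic P)) (termVal I f t₁)
      else if Term.IsZVar t₁ z then
        cclI T I (DLConcept.ex (Role.inv P)) (termVal I f t₂)
          - I.conceptMult (DLConcept.ex (Role.inv P)) (termVal I f t₂)
      else I.rI P (termVal I f t₁) (termVal I f t₂)
  | QAtom.eqAt v t => if f v = termVal I f t then 1 else 0

/-- Bag answers of the BALG query `q̄_z`, obtained from `q_z` by projecting only
the variables of `y' ∖ z` and replacing atoms as in `rewAtomVal`. -/
def rewAnswer (T : TBox) (qq : CQ) (z : Finset Var) (I : BagInterp) (a : List Ind) : ℕ∞ :=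
  bagSum (fun f : {f : Var → I.Δ //
      (∀ v, v ∉ qq.answerVars ++ qq.existVars.filter (fun u => decide (u ∉ z)) →
        f v = I.indMap 0) ∧
      qq.answerVars.map f = a.map I.indMap} =>
    (qq.atoms.map (rewAtomVal T I z f.1)).prod)

/- ## BALG¹_ε queries -/

def Term.fvars (t : Term) : Finset Var :=
  match t with
  | Term.var v => {v}
  | Term.ind _ => ∅

/-- Syntax of BALG¹_ε queries. -/
inductive BQuery where
  | atomC : AtomicConcept → Term → BQuery
  | atomR : AtomicRole → Term → Term → BQuery
  | conj : BQuery → BQuery → BQuery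
  | eqSel : BQuery → Var → Term → BQuery
  | proj : List Var → BQuery → BQuery
  | maxU : BQuery → BQuery → BQuery
  | arithU : BQuery → BQuery → BQuery
  | diff : BQuery → BQuery → BQuery

/-- Answer variables of a BALG¹_ε query. -/
def BQuery.fv : BQuery → Finset Var
  | BQuery.atomC _ t => t.fvars
  | BQuery.atomR _ t₁ t₂ => t₁.fvars ∪ t₂.fvars
  | BQuery.conj q₁ q₂ => q₁.fv ∪ q₂.fv
  | BQuery.eqSel q _ t => q.fv ∪ t.fvars
  | BQuery.proj ys q => q.fv \ ys.toFinset
  | BQuery.maxU q₁ _ => q₁.fv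
  | BQuery.arithU q₁ _ => q₁.fv
  | BQuery.diff q₁ _ => q₁.fv

/-- Well-formedness of BALG¹_ε queries. -/
def BQuery.WF : BQuery → Prop
  | BQuery.atomC _ _ => True
  | BQuery.atomR _ _ _ => True
  | BQuery.conj q₁ q₂ => q₁.WF ∧ q₂.WF
  | BQuery.eqSel q x _ => q.WF ∧ x ∈ q.fv
  | BQuery.proj _ q => q.WF
  | BQuery.maxU q₁ q₂ => q₁.WF ∧ q₂.WF ∧ q₁.fv = q₂.fv
  | BQuery.arithU q₁ q₂ => q₁.WF ∧ q₂.WF ∧ q₁.fv = q₂.fv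
  | BQuery.diff q₁ q₂ => q₁.WF ∧ q₂.WF ∧ q₁.fv = q₂.fv

/-- Semantics of BALG¹_ε queries under a valuation of the answer variables. -/
def BQuery.val (I : BagInterp) : BQuery → (Var → I.Δ) → ℕ∞
  | BQuery.atomC A t, f => I.cI A (termVal I f t)
  | BQuery.atomR P t₁ t₂, f => I.rI P (termVal I f t₁) (termVal I f t₂)
  | BQuery.conj q₁ q₂, f => q₁.val I f * q₂.val I f
  | BQuery.eqSel q x t, f => if f x = termVal I f t then q.val I f else 0
  | BQuery.proj ys q, f => bagSum (fun g : {g : Var → I.Δ // ∀ v, v ∉ ys → g v = f v} => q.val I g.1)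
  | BQuery.maxU q₁ q₂, f => max (q₁.val I f) (q₂.val I f)
  | BQuery.arithU q₁ q₂, f => q₁.val I f + q₂.val I f
  | BQuery.diff q₁ q₂, f => q₁.val I f - q₂.val I f

/-- Bag answers of a BALG¹_ε query with answer variables `xs` on a tuple `a`. -/
def BQuery.answer (Q : BQuery) (xs : List Var) (I : BagInterp) (a : List Ind) : ℕ∞ :=
  if a.length = xs.length then Q.val I (fun v => I.indMap (a.getD (xs.idxOf v) 0)) else 0

/- ## Enumerated bags, e-homomorphisms, and e-valuations -/

/-- Enumerated copies of a bag of domain elements (for an atomic concept). -/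
def EBagC (I : BagInterp) (A : AtomicConcept) : Type :=
  {p : I.Δ × ℕ // 1 ≤ p.2 ∧ (p.2 : ℕ∞) ≤ I.cI A p.1}

/-- Enumerated copies of a bag of pairs (for an atomic role). -/
def EBagR (I : BagInterp) (P : AtomicRole) : Type :=
  {p : (I.Δ × I.Δ) × ℕ // 1 ≤ p.2 ∧ (p.2 : ℕ∞) ≤ I.rI P p.1.1 p.1.2}

/-- An e-homomorphism between the enumerated versions of two bag interpretations. -/
structure EHom (I J : BagInterp) where
  h : I.Δ → J.Δ
  hInd : ∀ a : Ind, h (I.indMap a) = J.indMap a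
  hC : ∀ A : AtomicConcept, EBagC I A → EBagC J A
  hC_fst : ∀ (A : AtomicConcept) (x : EBagC I A), (hC A x).1.1 = h x.1.1
  hR : ∀ P : AtomicRole, EBagR I P → EBagR J P
  hR_fst : ∀ (P : AtomicRole) (x : EBagR I P), (hR P x).1.1 = (h x.1.1.1, h x.1.1.2)

/-- Predicate-injectivity on individuals of an e-homomorphism. -/
def EHom.PredInj {I J : BagInterp} (e : EHom I J) : Prop :=
  ∀ u : I.Δ, (∃ a : Ind, e.h u = J.indMap a) →
    (∀ A : AtomicConcept, ∀ x y : EBagC I A,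
      x.1.1 = u → y.1.1 = u → x.1.2 ≠ y.1.2 → e.hC A x ≠ e.hC A y) ∧
    (∀ P : AtomicRole, ∀ x y : EBagR I P, x.1.1.1 = u → y.1.1.1 = u →
      (x.1.1.2, x.1.2) ≠ (y.1.1.2, y.1.2) → e.hR P x ≠ e.hR P y) ∧
    (∀ P : AtomicRole, ∀ x y : EBagR I P, x.1.1.2 = u → y.1.1.2 = u →
      (x.1.1.1, x.1.2) ≠ (y.1.1.1, y.1.2) → e.hR P x ≠ e.hR P y)

/-- Enumerated atoms of a CQ (seen as a bag of atoms). -/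
def EAtom (q : CQ) : Type := {p : QAtom × ℕ // 1 ≤ p.2 ∧ p.2 ≤ q.atoms.count p.1}

/-- An e-valuation of the enumerated query `q^e` over the enumerated
interpretation `I^e`. -/
structure EVal (q : CQ) (I : BagInterp) where
  ν : Var → I.Δ
  hjunk : ∀ v, v ∉ q.vars → ν v = I.indMap 0
  heq : ∀ z t, QAtom.eqAt z t ∈ q.atoms → ν z = termVal I ν t
  ℓ : EAtom q → ℕ
  hone : ∀ e : EAtom q, 1 ≤ ℓ e
  hconcept : ∀ (e : EAtom q) (A : AtomicConcept) (t : Term),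
    e.1.1 = QAtom.conceptAt A t → (ℓ e : ℕ∞) ≤ I.cI A (termVal I ν t)
  hrole : ∀ (e : EAtom q) (P : AtomicRole) (t₁ t₂ : Term),
    e.1.1 = QAtom.roleAt P t₁ t₂ → (ℓ e : ℕ∞) ≤ I.rI P (termVal I ν t₁) (termVal I ν t₂)
  heqm : ∀ (e : EAtom q) (z : Var) (t : Term), e.1.1 = QAtom.eqAt z t → ℓ e = 1

/-- The tuple of domain elements to which an e-atom is sent by an e-valuation. -/
def EVal.imgTerms {q : CQ} {I : BagInterp} (ev : EVal q I) (e : EAtom q) : List I.Δ :=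
  (QAtom.terms e.1.1).map (termVal I ev.ν)

/-- The enumerated image of an e-atom under an e-valuation. -/
def EVal.img {q : CQ} {I : BagInterp} (ev : EVal q I) (e : EAtom q) : List I.Δ × ℕ :=
  (ev.imgTerms e, ev.ℓ e)

/- ## Auxiliary concrete queries -/

/-- The CQ `ζ_C(x)`: `A(x)`, `∃y.P(x,y)` or `∃y.P(y,x)`. -/
def zetaCQ : DLConcept → CQ
  | DLConcept.atomic A => ⟨[0], [], [QAtom.conceptAt A (Term.var 0)]⟩
  | DLConcept.ex (Role.atomic P) => ⟨[0], [1], [QAtom.roleAt P (Term.var 0) (Term.var 1)]⟩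
  | DLConcept.ex (Role.inv P) => ⟨[0], [1], [QAtom.roleAt P (Term.var 1) (Term.var 0)]⟩

/-- The CQ `q(x) = R(x,x)`. -/
def selfCQ (P : AtomicRole) : CQ := ⟨[0], [], [QAtom.roleAt P (Term.var 0) (Term.var 0)]⟩

/-! ### Auxiliary development for Statement 15 -/

section Statement15Aux

lemma enat_eq_top_of_forall_le {x : ℕ∞} (h : ∀ n : ℕ, (n : ℕ∞) ≤ x) : x = ⊤ := by
  cases x with
  | top => rfl
  | coe m => exact absurd (h (m + 1)) (by exact_mod_cast by omega)

lemma le_bagSum {α : Type*} (f : α → ℕ∞) (x : α) : f x ≤ bagSum f := by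
  have h : f x = ∑ y ∈ ({x} : Finset α), f y := by simp
  rw [h]; exact le_iSup (fun s : Finset α => ∑ y ∈ s, f y) {x}

lemma bagSum_le_of_le {α : Type*} {f g : α → ℕ∞} (h : ∀ x, f x ≤ g x) : bagSum f ≤ bagSum g :=
  iSup_le fun s => le_trans (Finset.sum_le_sum fun x _ => h x)
    (le_iSup (fun t : Finset α => ∑ x ∈ t, g x) s)

lemma bagSum_zero {α : Type*} {f : α → ℕ∞} (h : ∀ x, f x = 0) : bagSum f = 0 := by
  refine le_antisymm (iSup_le fun s => ?_) (zero_le)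
  simp [h]

/-- The enumerated copies of a bag. -/
def copiesOf {α : Type*} (f : α → ℕ∞) : Set (α × ℕ) := {p | 1 ≤ p.2 ∧ (p.2 : ℕ∞) ≤ f p.1}

lemma encard_copies_nat (n : ℕ∞) : ({k : ℕ | 1 ≤ k ∧ (k : ℕ∞) ≤ n}).encard = n := by
  cases n with
  | top =>
    rw [Set.encard_eq_top_iff]
    have h : {k : ℕ | 1 ≤ k ∧ (k : ℕ∞) ≤ ⊤} = Set.Ici 1 := by ext k; simp
    rw [h]; exact Set.Ici_infinite 1
  | coe m =>
    have h : {k : ℕ | 1 ≤ k ∧ (k : ℕ∞) ≤ (m : ℕ∞)} = ↑(Finset.Icc 1 m) := by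
      ext k; simp [Nat.cast_le]
    rw [h, Set.encard_coe_eq_coe_finsetCard, Nat.card_Icc]
    simp

lemma encard_fiber {α : Type*} (f : α → ℕ∞) (a : α) :
    ({p ∈ copiesOf f | p.1 = a}).encard = f a := by
  have h : {p ∈ copiesOf f | p.1 = a} = (fun k => (a, k)) '' {k : ℕ | 1 ≤ k ∧ (k : ℕ∞) ≤ f a} := by
    ext ⟨x, k⟩
    constructor
    · rintro ⟨⟨h1, h2⟩, rfl⟩; exact ⟨k, ⟨h1, h2⟩, rfl⟩
    · rintro ⟨k', ⟨h1, h2⟩, heq⟩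
      cases heq; exact ⟨⟨h1, h2⟩, rfl⟩
  have hinj : Function.Injective (fun k : ℕ => (a, k)) := by
    intro k l hkl; simpa using hkl
  rw [h, hinj.encard_image, encard_copies_nat]

lemma sum_le_encard_part {α : Type*} (f : α → ℕ∞) (s : Finset α) :
    ∑ x ∈ s, f x ≤ ({p ∈ copiesOf f | p.1 ∈ s}).encard := by
  classical
  induction s using Finset.induction with
  | empty => simp
  | @insert a s ha ih =>
    rw [Finset.sum_insert ha]
    have hdis : Disjoint {p ∈ copiesOf f | p.1 = a} {p ∈ copiesOf f | p.1 ∈ s} := by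
      rw [Set.disjoint_left]; rintro ⟨x, k⟩ ⟨_, rfl⟩ ⟨_, h2⟩; exact ha h2
    have hsub : {p ∈ copiesOf f | p.1 = a} ∪ {p ∈ copiesOf f | p.1 ∈ s}
        ⊆ {p ∈ copiesOf f | p.1 ∈ insert a s} := by
      rintro p (⟨hp, h⟩ | ⟨hp, h⟩)
      · exact ⟨hp, by simp [h]⟩
      · exact ⟨hp, by simp [h]⟩
    calc f a + ∑ x ∈ s, f x
        ≤ ({p ∈ copiesOf f | p.1 = a}).encard + ({p ∈ copiesOf f | p.1 ∈ s}).encard :=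
          add_le_add (le_of_eq (encard_fiber f a).symm) ih
      _ = ({p ∈ copiesOf f | p.1 = a} ∪ {p ∈ copiesOf f | p.1 ∈ s}).encard :=
          (Set.encard_union_eq hdis).symm
      _ ≤ _ := Set.encard_mono hsub

lemma encard_part_le_sum {α : Type*} (f : α → ℕ∞) (s : Finset α) :
    ({p ∈ copiesOf f | p.1 ∈ s}).encard ≤ ∑ x ∈ s, f x := by
  classical
  induction s using Finset.induction with
  | empty => simp
  | @insert a s ha ih =>
    rw [Finset.sum_insert ha]
    have hsub : {p ∈ copiesOf f | p.1 ∈ insert a s}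
        ⊆ {p ∈ copiesOf f | p.1 = a} ∪ {p ∈ copiesOf f | p.1 ∈ s} := by
      rintro p ⟨hp, h⟩
      rcases Finset.mem_insert.mp h with h | h
      · exact Or.inl ⟨hp, h⟩
      · exact Or.inr ⟨hp, h⟩
    calc ({p ∈ copiesOf f | p.1 ∈ insert a s}).encard
        ≤ ({p ∈ copiesOf f | p.1 = a} ∪ {p ∈ copiesOf f | p.1 ∈ s}).encard :=
          Set.encard_mono hsub
      _ ≤ ({p ∈ copiesOf f | p.1 = a}).encard + ({p ∈ copiesOf f | p.1 ∈ s}).encard :=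
          Set.encard_union_le _ _
      _ ≤ f a + ∑ x ∈ s, f x := add_le_add (le_of_eq (encard_fiber f a)) ih

lemma bagSum_eq_encard {α : Type*} (f : α → ℕ∞) : bagSum f = (copiesOf f).encard := by
  classical
  refine le_antisymm (iSup_le fun s => ?_) ?_
  · exact (sum_le_encard_part f s).trans (Set.encard_mono fun p hp => hp.1)
  · by_cases htop : ∃ x, f x = ⊤
    · obtain ⟨x, hx⟩ := htop
      have h : bagSum f = ⊤ := top_le_iff.mp (hx ▸ le_bagSum f x)
      simp [h]
    · push_neg at htop
      by_cases hsupp : ({x | 1 ≤ f x}).Finite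
      · have hE : copiesOf f = {p ∈ copiesOf f | p.1 ∈ hsupp.toFinset} := by
          ext p
          refine ⟨fun hp => ⟨hp, ?_⟩, fun hp => hp.1⟩
          rw [Set.Finite.mem_toFinset]
          exact le_trans (by exact_mod_cast hp.1) hp.2
        rw [hE]
        exact (encard_part_le_sum f hsupp.toFinset).trans
          (le_iSup (fun t : Finset α => ∑ x ∈ t, f x) hsupp.toFinset)
      · have h : bagSum f = ⊤ := by
          apply enat_eq_top_of_forall_le
          intro n
          have hinf : ({x | 1 ≤ f x}).Infinite := hsupp
          obtain ⟨t, hts, hcard⟩ := hinf.exists_subset_card_eq n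
          calc (n : ℕ∞) = ∑ _x ∈ t, (1 : ℕ∞) := by simp [hcard]
            _ ≤ ∑ x ∈ t, f x := Finset.sum_le_sum fun x hx => hts hx
            _ ≤ bagSum f := le_iSup (fun t : Finset α => ∑ x ∈ t, f x) t
        rw [h]; exact le_top

end Statement15Aux
section Statement15Ent

/-- The inverse of a role. -/
def Role.flip : Role → Role
  | Role.atomic P => Role.inv P
  | Role.inv P => Role.atomic P

@[simp] lemma Role.flip_flip (R : Role) : R.flip.flip = R := by cases R <;> rfl

lemma BagInterp.roleMult_flip (I : BagInterp) (R : Role) (u v : I.Δ) :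
    I.roleMult R.flip u v = I.roleMult R v u := by cases R <;> rfl

/-- Syntactic subsumption: reflexive-transitive closure of the inclusion axioms. -/
def SubRel (T : TBox) : DLConcept → DLConcept → Prop :=
  Relation.ReflTransGen (fun C D => TBoxAxiom.cIncl C D ∈ T)

/-- Syntactic inconsistency of a concept w.r.t. a TBox. -/
inductive Incon (T : TBox) : DLConcept → Prop
  | disj {C D D'} : SubRel T C D → SubRel T C D' → TBoxAxiom.cDisj D D' ∈ T → Incon T C
  | role {C R} : SubRel T C (DLConcept.ex R) → Incon T (DLConcept.ex R.flip) → Incon T C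

lemma sub_sound {T : TBox} {I : BagInterp} (hax : ∀ ax ∈ T, I.SatisfiesAx ax)
    {C D : DLConcept} (h : SubRel T C D) :
    ∀ u, I.conceptMult C u ≤ I.conceptMult D u := by
  induction h with
  | refl => exact fun u => le_rfl
  | tail _ hstep ih => exact fun u => (ih u).trans ((hax _ hstep) u)

lemma incon_sound {T : TBox} {I : BagInterp} (hax : ∀ ax ∈ T, I.SatisfiesAx ax)
    {C : DLConcept} (h : Incon T C) : ∀ u, I.conceptMult C u = 0 := by
  induction h with
  | disj h1 h2 hdisj =>
    intro u
    have hmin : min (I.conceptMult _ u) (I.conceptMult _ u) = 0 := (hax _ hdisj) u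
    rcases min_eq_iff.mp hmin with ⟨hz, _⟩ | ⟨hz, _⟩
    · exact le_antisymm (hz ▸ sub_sound hax h1 u) (zero_le)
    · exact le_antisymm (hz ▸ sub_sound hax h2 u) (zero_le)
  | @role C R h1 _ ih =>
    intro u
    have hzero : ∀ v w, I.roleMult R.flip v w = 0 := fun v w =>
      le_antisymm ((le_bagSum _ w).trans (le_of_eq (ih v))) (zero_le)
    have h0 : I.conceptMult (DLConcept.ex R) u = 0 := by
      apply bagSum_zero
      intro v
      rw [← I.roleMult_flip]
      exact hzero v u
    exact le_antisymm ((sub_sound hax h1 u).trans h0.le) (zero_le)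

lemma entails_syn {T : TBox} (hcore : TBox.IsCore T) {C D : DLConcept}
    (h : TBox.EntailsCI T C D) : SubRel T C D ∨ Incon T C := by
  by_contra hcon
  push_neg at hcon
  obtain ⟨hnsub, hninc⟩ := hcon
  classical
  set J : SetInterp :=
    { Δ := DLConcept ⊕ ℕ
      dne := ⟨Sum.inr 0⟩
      indMap := Sum.inr
      indInj := fun a b hab => by simpa using hab
      cI := fun A => {x | ∃ E, x = Sum.inl E ∧ ¬Incon T E ∧ SubRel T E (DLConcept.atomic A)}
      rI := fun P => {p | (∃ E, ¬Incon T E ∧ SubRel T E (DLConcept.ex (Role.atomic P)) ∧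
                        p = (Sum.inl E, Sum.inl (DLConcept.ex (Role.inv P)))) ∨
                      (∃ E, ¬Incon T E ∧ SubRel T E (DLConcept.ex (Role.inv P)) ∧
                        p = (Sum.inl (DLConcept.ex (Role.atomic P)), Sum.inl E))} } with hJ
  have mem_intro : ∀ (E : DLConcept) (C₀ : DLConcept), ¬Incon T E → SubRel T E C₀ →
      Sum.inl E ∈ J.conceptSet C₀ := by
    intro E C₀ hE hsub
    cases C₀ with
    | atomic A => exact ⟨E, rfl, hE, hsub⟩
    | ex R =>
      cases R with
      | atomic P =>
        exact ⟨Sum.inl (DLConcept.ex (Role.inv P)), Or.inl ⟨E, hE, hsub, rfl⟩⟩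
      | inv P =>
        exact ⟨Sum.inl (DLConcept.ex (Role.atomic P)), Or.inr ⟨E, hE, hsub, rfl⟩⟩
  have mem_inv : ∀ (x : J.Δ) (C₀ : DLConcept), x ∈ J.conceptSet C₀ →
      ∃ E, x = Sum.inl E ∧ ¬Incon T E ∧ SubRel T E C₀ := by
    intro x C₀ hx
    cases C₀ with
    | atomic A => exact hx
    | ex R =>
      cases R with
      | atomic P =>
        obtain ⟨v, hv⟩ := hx
        rcases hv with ⟨E, hE, hsub, heq⟩ | ⟨E, hE, hsub, heq⟩
        · have hx1 : x = Sum.inl E := congrArg Prod.fst heq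
          exact ⟨E, hx1, hE, hsub⟩
        · have hx1 : x = Sum.inl (DLConcept.ex (Role.atomic P)) := congrArg Prod.fst heq
          refine ⟨DLConcept.ex (Role.atomic P), hx1, ?_, Relation.ReflTransGen.refl⟩
          intro hbad
          exact hE (Incon.role hsub (by simpa [Role.flip] using hbad))
      | inv P =>
        obtain ⟨v, hv⟩ := hx
        rcases hv with ⟨E, hE, hsub, heq⟩ | ⟨E, hE, hsub, heq⟩
        · have hx1 : x = Sum.inl (DLConcept.ex (Role.inv P)) := congrArg Prod.snd heq
          refine ⟨DLConcept.ex (Role.inv P), hx1, ?_, Relation.ReflTransGen.refl⟩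
          intro hbad
          exact hE (Incon.role hsub (by simpa [Role.flip] using hbad))
        · have hx1 : x = Sum.inl E := congrArg Prod.snd heq
          exact ⟨E, hx1, hE, hsub⟩
  have hsat : ∀ ax ∈ T, J.SatisfiesAx ax := by
    intro ax hax
    rcases hcore ax hax with ⟨C₀, D₀, rfl⟩ | ⟨C₀, D₀, rfl⟩
    · intro x hx
      obtain ⟨E, rfl, hE, hsub⟩ := mem_inv x C₀ hx
      exact mem_intro E D₀ hE (hsub.tail hax)
    · ext x
      simp only [Set.mem_inter_iff, Set.mem_empty_iff_false, iff_false, not_and]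
      intro hx hy
      obtain ⟨E, rfl, hE, hsub⟩ := mem_inv x C₀ hx
      obtain ⟨E', hEE, _, hsub'⟩ := mem_inv _ D₀ hy
      cases hEE
      exact hE (Incon.disj hsub hsub' hax)
  have hC : Sum.inl C ∈ J.conceptSet C := mem_intro C C hninc Relation.ReflTransGen.refl
  obtain ⟨E, hE, _, hsub⟩ := mem_inv _ D (h J hsat hC)
  cases hE
  exact hnsub hsub

lemma entails_mono {T : TBox} {I : BagInterp} (hcore : TBox.IsCore T)
    (hax : ∀ ax ∈ T, I.SatisfiesAx ax) {C D : DLConcept} (h : TBox.EntailsCI T C D) :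
    ∀ u, I.conceptMult C u ≤ I.conceptMult D u := by
  rcases entails_syn hcore h with hs | hi
  · exact sub_sound hax hs
  · exact fun u => (incon_sound hax hi u) ▸ zero_le

end Statement15Ent
section Statement15Can

variable (K : Ontology)

/-- Active elements at stage `i`. -/
def ActiveAt (i : ℕ) : Set CanElem := (canStage K i).active

/-- Created elements. -/
def Created (w : CanElem) : Prop := ∃ i, w ∈ ActiveAt K i

variable {K}

lemma active_mono {i : ℕ} : ActiveAt K i ⊆ ActiveAt K (i + 1) := by
  intro u hu
  exact Or.inl hu

lemma active_le {i i' : ℕ} (h : i ≤ i') : ActiveAt K i ⊆ ActiveAt K i' := by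
  induction h with
  | refl => exact le_rfl
  | step _ ih => exact fun u hu => active_mono (ih hu)

lemma ind_active (a : Ind) (i : ℕ) : CanElem.ind a ∈ ActiveAt K i := by
  induction i with
  | zero => exact ⟨a, rfl⟩
  | succ k ih => exact active_mono ih

lemma active0_ind {u : CanElem} (h : u ∈ ActiveAt K 0) : ∃ a, u = CanElem.ind a := by
  obtain ⟨a, ha⟩ := h
  exact ⟨a, ha.symm⟩

lemma newAnon_iff {i : ℕ} {u : CanElem} {R : Role} {j : ℕ} :
    (canStage K i).NewAnon K.tbox (CanElem.anon u R j) ↔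
      u ∈ ActiveAt K i ∧ (j : ℕ∞) < (canStage K i).delta K.tbox u R := by
  constructor
  · rintro ⟨u', R', j', heq, hu', hlt⟩
    obtain ⟨rfl, rfl, rfl⟩ := CanElem.anon.injEq .. ▸ heq
    exact ⟨hu', hlt⟩
  · rintro ⟨hu, hlt⟩
    exact ⟨u, R, j, rfl, hu, hlt⟩

lemma anon_active_succ {i : ℕ} {u : CanElem} {R : Role} {j : ℕ} :
    CanElem.anon u R j ∈ ActiveAt K (i + 1) ↔
      CanElem.anon u R j ∈ ActiveAt K i ∨
        (u ∈ ActiveAt K i ∧ (j : ℕ∞) < (canStage K i).delta K.tbox u R) := by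
  constructor
  · rintro (h | h)
    · exact Or.inl h
    · exact Or.inr (newAnon_iff.mp h)
  · rintro (h | h)
    · exact Or.inl h
    · exact Or.inr (newAnon_iff.mpr h)

lemma anon_not_active0 {u : CanElem} {R : Role} {j : ℕ} :
    CanElem.anon u R j ∉ ActiveAt K 0 := by
  rintro ⟨a, ha⟩
  cases ha

lemma parent_active {u : CanElem} {R : Role} {j : ℕ} :
    ∀ {i : ℕ}, CanElem.anon u R j ∈ ActiveAt K i → u ∈ ActiveAt K i := by
  intro i
  induction i with
  | zero => exact fun h => absurd h anon_not_active0
  | succ k ih =>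
    intro h
    rcases anon_active_succ.mp h with h | h
    · exact active_mono (ih h)
    · exact active_mono h.1

lemma active_anon_exists {u : CanElem} {R : Role} {j : ℕ} :
    ∀ {i : ℕ}, CanElem.anon u R j ∈ ActiveAt K i →
      ∃ k < i, u ∈ ActiveAt K k ∧ (j : ℕ∞) < (canStage K k).delta K.tbox u R := by
  intro i
  induction i with
  | zero => exact fun h => absurd h anon_not_active0
  | succ k ih =>
    intro h
    rcases anon_active_succ.mp h with h | h
    · obtain ⟨k', hk', h'⟩ := ih h
      exact ⟨k', Nat.lt_succ_of_lt hk', h'⟩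
    · exact ⟨k, Nat.lt_succ_self k, h⟩

lemma c_zero_not_active {i : ℕ} {u : CanElem} (h : u ∉ ActiveAt K i) (A : AtomicConcept) :
    (canStage K i).c A u = 0 := by
  cases i with
  | zero =>
    cases u with
    | ind a => exact absurd (ind_active a 0) h
    | anon w R j => rfl
  | succ k =>
    have h' : u ∉ ActiveAt K k := fun hu => h (active_mono hu)
    exact if_neg h'

lemma c_succ_active {i : ℕ} {u : CanElem} (h : u ∈ ActiveAt K i) (A : AtomicConcept) :
    (canStage K (i + 1)).c A u = (canStage K i).ccl K.tbox u (DLConcept.atomic A) :=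
  if_pos h

/-- The ABox multiplicity of a role edge between two individuals. -/
def aboxRoleN (K : Ontology) : Role → Ind → Ind → ℕ∞
  | Role.atomic P, a, b => (K.abox.count (Assertion.roleA P a b) : ℕ∞)
  | Role.inv P, a, b => (K.abox.count (Assertion.roleA P b a) : ℕ∞)

/-- The ABox part of the canonical interpretation of a role. -/
def rBaseRole (K : Ontology) (R : Role) : CanElem → CanElem → ℕ∞
  | CanElem.ind a, CanElem.ind b => aboxRoleN K R a b
  | _, _ => 0

lemma rBaseRole_flip (R : Role) (u v : CanElem) :
    rBaseRole K R.flip u v = rBaseRole K R v u := by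
  cases u <;> cases v <;> cases R <;> rfl

lemma rBaseRole_anon_left {w : CanElem} {R₀ : Role} {j : ℕ} (R : Role) (v : CanElem) :
    rBaseRole K R (CanElem.anon w R₀ j) v = 0 := by
  cases v <;> rfl

lemma rBaseRole_anon_right {w : CanElem} {R₀ : Role} {j : ℕ} (R : Role) (u : CanElem) :
    rBaseRole K R u (CanElem.anon w R₀ j) = 0 := by
  cases u <;> rfl

/-- The "fresh-edge" condition at stage `i`. -/
def EdgeCond (K : Ontology) (i : ℕ) (P : AtomicRole) (u v : CanElem) : Prop :=
  (∃ j, v = CanElem.anon u (Role.atomic P) j ∧ v ∈ ActiveAt K i) ∨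
  (∃ j, u = CanElem.anon v (Role.inv P) j ∧ u ∈ ActiveAt K i)

/-- Depth of a canonical element. -/
def cdepth : CanElem → ℕ
  | CanElem.ind _ => 0
  | CanElem.anon u _ _ => cdepth u + 1

lemma parent_not_child {u v : CanElem} {R R' : Role} {j j' : ℕ}
    (h : u = CanElem.anon v R' j') : v ≠ CanElem.anon u R j := by
  intro h'
  have hd : cdepth u = cdepth v + 1 := by rw [h]; rfl
  have hd' : cdepth v = cdepth u + 1 := by rw [h']; rfl
  omega

open scoped Classical in
lemma r_char (i : ℕ) (P : AtomicRole) (u v : CanElem) :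
    (canStage K i).r P u v =
      rBaseRole K (Role.atomic P) u v + (if EdgeCond K i P u v then 1 else 0) := by
  induction i with
  | zero =>
    have hnc : ¬ EdgeCond K 0 P u v := by
      rintro (⟨j, hj, hact⟩ | ⟨j, hj, hact⟩)
      · exact anon_not_active0 (hj ▸ hact)
      · exact anon_not_active0 (hj ▸ hact)
    rw [if_neg hnc, add_zero]
    cases u <;> cases v <;> rfl
  | succ k ih =>
    show (if _ ∧ _ then _ else _) = _
    by_cases hb : u ∈ (canStage K k).active ∧ v ∈ (canStage K k).active
    · rw [if_pos hb, ih]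
      congr 1
      by_cases hc : EdgeCond K k P u v
      · rw [if_pos hc, if_pos]
        rcases hc with ⟨j, hj, hact⟩ | ⟨j, hj, hact⟩
        · exact Or.inl ⟨j, hj, active_mono hact⟩
        · exact Or.inr ⟨j, hj, active_mono hact⟩
      · rw [if_neg hc, if_neg]
        rintro (⟨j, hj, _⟩ | ⟨j, hj, _⟩)
        · exact hc (Or.inl ⟨j, hj, hj ▸ hb.2⟩)
        · exact hc (Or.inr ⟨j, hj, hj ▸ hb.1⟩)
    · rw [if_neg hb]
      by_cases h2 : ∃ j, v = CanElem.anon u (Role.atomic P) j ∧ (canStage K k).NewAnon K.tbox v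
      · rw [if_pos h2]
        obtain ⟨j, hj, hnew⟩ := h2
        have hact : v ∈ ActiveAt K (k + 1) := Or.inr hnew
        rw [if_pos (show EdgeCond K (k + 1) P u v from Or.inl ⟨j, hj, hact⟩), hj,
          rBaseRole_anon_right, zero_add]
      · rw [if_neg h2]
        by_cases h3 : ∃ j, u = CanElem.anon v (Role.inv P) j ∧ (canStage K k).NewAnon K.tbox u
        · rw [if_pos h3]
          obtain ⟨j, hj, hnew⟩ := h3
          have hact : u ∈ ActiveAt K (k + 1) := Or.inr hnew
          rw [if_pos (show EdgeCond K (k + 1) P u v from Or.inr ⟨j, hj, hact⟩), hj,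
            rBaseRole_anon_left, zero_add]
        · rw [if_neg h3]
          have hbase : rBaseRole K (Role.atomic P) u v = 0 := by
            cases u with
            | ind a =>
              cases v with
              | ind b => exact absurd ⟨ind_active a k, ind_active b k⟩ hb
              | anon => rfl
            | anon => exact rBaseRole_anon_left _ _
          have hcond : ¬ EdgeCond K (k + 1) P u v := by
            rintro (⟨j, hj, hact⟩ | ⟨j, hj, hact⟩)
            · subst hj
              rcases anon_active_succ.mp hact with ha | ha
              · exact hb ⟨parent_active ha, ha⟩
              · exact h2 ⟨j, rfl, newAnon_iff.mpr ha⟩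
            · subst hj
              rcases anon_active_succ.mp hact with ha | ha
              · exact hb ⟨ha, parent_active ha⟩
              · exact h3 ⟨j, rfl, newAnon_iff.mpr ha⟩
          rw [hbase, zero_add, if_neg hcond]

end Statement15Can
section Statement15Lim

variable {K : Ontology}

lemma roleMult_lim_eq_sup (R : Role) (u v : CanElem) :
    (canInterp K).roleMult R u v = ⨆ i, (canStage K i).toInterp.roleMult R u v := by
  cases R <;> rfl

open scoped Classical in
lemma roleMult_stage_char (i : ℕ) (R : Role) (u v : CanElem) :
    (canStage K i).toInterp.roleMult R u v =
      rBaseRole K R u v +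
        (if (∃ j, v = CanElem.anon u R j ∧ v ∈ ActiveAt K i) ∨
            (∃ j, u = CanElem.anon v R.flip j ∧ u ∈ ActiveAt K i) then 1 else 0) := by
  cases R with
  | atomic P =>
    show (canStage K i).r P u v = _
    rw [r_char i P u v]
    exact congrArg (rBaseRole K (Role.atomic P) u v + ·) (if_congr Iff.rfl rfl rfl)
  | inv P =>
    show (canStage K i).r P v u = _
    rw [r_char i P v u]
    have h1 : rBaseRole K (Role.atomic P) v u = rBaseRole K (Role.inv P) u v :=
      rBaseRole_flip (Role.inv P) v u
    have h2 : (if EdgeCond K i P v u then (1 : ℕ∞) else 0) =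
        if (∃ j, v = CanElem.anon u (Role.inv P) j ∧ v ∈ ActiveAt K i) ∨
            (∃ j, u = CanElem.anon v (Role.inv P).flip j ∧ u ∈ ActiveAt K i) then 1 else 0 :=
      if_congr or_comm rfl rfl
    exact congrArg₂ (· + ·) h1 h2

lemma stage_le_lim (i : ℕ) (R : Role) (u v : CanElem) :
    (canStage K i).toInterp.roleMult R u v ≤ (canInterp K).roleMult R u v := by
  rw [roleMult_lim_eq_sup]
  exact le_iSup (fun i => (canStage K i).toInterp.roleMult R u v) i

open scoped Classical in
lemma roleMult_lim_char (R : Role) (u v : CanElem) :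
    (canInterp K).roleMult R u v =
      rBaseRole K R u v +
        (if (∃ j, v = CanElem.anon u R j ∧ Created K v) ∨
            (∃ j, u = CanElem.anon v R.flip j ∧ Created K u) then 1 else 0) := by
  rw [roleMult_lim_eq_sup]
  apply le_antisymm
  · apply iSup_le
    intro i
    rw [roleMult_stage_char]
    apply add_le_add le_rfl
    split_ifs with h1 h2
    · exact le_rfl
    · exfalso
      apply h2
      rcases h1 with ⟨j, hj, hact⟩ | ⟨j, hj, hact⟩
      · exact Or.inl ⟨j, hj, i, hact⟩
      · exact Or.inr ⟨j, hj, i, hact⟩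
    · exact zero_le
    · exact le_rfl
  · split_ifs with h
    · rcases h with ⟨j, hj, i, hact⟩ | ⟨j, hj, i, hact⟩
      · rw [show rBaseRole K R u v + 1 =
            (canStage K i).toInterp.roleMult R u v from by
          rw [roleMult_stage_char, if_pos (Or.inl ⟨j, hj, hact⟩)]]
        exact le_iSup (fun i => (canStage K i).toInterp.roleMult R u v) i
      · rw [show rBaseRole K R u v + 1 =
            (canStage K i).toInterp.roleMult R u v from by
          rw [roleMult_stage_char, if_pos (Or.inr ⟨j, hj, hact⟩)]]
        exact le_iSup (fun i => (canStage K i).toInterp.roleMult R u v) i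
    · have h0 : ¬ ((∃ j, v = CanElem.anon u R j ∧ v ∈ ActiveAt K 0) ∨
          (∃ j, u = CanElem.anon v R.flip j ∧ u ∈ ActiveAt K 0)) := by
        rintro (⟨j, hj, hact⟩ | ⟨j, hj, hact⟩)
        · exact h (Or.inl ⟨j, hj, 0, hact⟩)
        · exact h (Or.inr ⟨j, hj, 0, hact⟩)
      rw [add_zero, show rBaseRole K R u v = (canStage K 0).toInterp.roleMult R u v from by
        rw [roleMult_stage_char, if_neg h0, add_zero]]
      exact le_iSup (fun i => (canStage K i).toInterp.roleMult R u v) 0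

lemma rBaseRole_pos {R : Role} {u v : CanElem} (h : rBaseRole K R u v ≠ 0) :
    ∃ a b, u = CanElem.ind a ∧ v = CanElem.ind b ∧
      rBaseRole K R u v = aboxRoleN K R a b := by
  cases u with
  | ind a =>
    cases v with
    | ind b => exact ⟨a, b, rfl, rfl, rfl⟩
    | anon => exact absurd (rBaseRole_anon_right _ _) h
  | anon => exact absurd (rBaseRole_anon_left _ _) h

lemma roleMult_stage_pos_active {i : ℕ} {R : Role} {u v : CanElem}
    (h : 1 ≤ (canStage K i).toInterp.roleMult R u v) :
    u ∈ ActiveAt K i ∧ v ∈ ActiveAt K i := by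
  classical
  rw [roleMult_stage_char] at h
  by_cases hc : (∃ j, v = CanElem.anon u R j ∧ v ∈ ActiveAt K i) ∨
      (∃ j, u = CanElem.anon v R.flip j ∧ u ∈ ActiveAt K i)
  · rcases hc with ⟨j, hj, hact⟩ | ⟨j, hj, hact⟩
    · exact ⟨parent_active (hj ▸ hact), hact⟩
    · exact ⟨hact, parent_active (hj ▸ hact)⟩
  · rw [if_neg hc, add_zero] at h
    have hne : rBaseRole K R u v ≠ 0 := by
      intro h0
      rw [h0] at h
      exact absurd h (by simp)
    obtain ⟨a, b, hu, hv, _⟩ := rBaseRole_pos hne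
    subst hu; subst hv
    exact ⟨ind_active a i, ind_active b i⟩

lemma nat_le_one_cast {m : ℕ} (h : (m : ℕ∞) ≤ 1) : m ≤ 1 := by exact_mod_cast h

lemma succ_cases_lim {R : Role} {u v : CanElem} {m : ℕ} (h1 : 1 ≤ m)
    (h2 : (m : ℕ∞) ≤ (canInterp K).roleMult R u v) :
    (∃ a b, u = CanElem.ind a ∧ v = CanElem.ind b ∧ (m : ℕ∞) ≤ aboxRoleN K R a b) ∨
    (∃ j, v = CanElem.anon u R j ∧ Created K v ∧ m = 1) ∨
    (∃ j, u = CanElem.anon v R.flip j ∧ Created K u ∧ m = 1) := by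
  classical
  rw [roleMult_lim_char] at h2
  by_cases hc : (∃ j, v = CanElem.anon u R j ∧ Created K v) ∨
      (∃ j, u = CanElem.anon v R.flip j ∧ Created K u)
  · rw [if_pos hc] at h2
    rcases hc with ⟨j, hj, hcr⟩ | ⟨j, hj, hcr⟩
    · refine Or.inr (Or.inl ⟨j, hj, hcr, ?_⟩)
      rw [hj, rBaseRole_anon_right, zero_add] at h2
      have := nat_le_one_cast h2
      omega
    · refine Or.inr (Or.inr ⟨j, hj, hcr, ?_⟩)
      rw [hj, rBaseRole_anon_left, zero_add] at h2
      have := nat_le_one_cast h2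
      omega
  · rw [if_neg hc, add_zero] at h2
    have hne : rBaseRole K R u v ≠ 0 := by
      intro h0
      rw [h0] at h2
      have : (m : ℕ∞) = 0 := le_antisymm h2 (zero_le)
      simp at this
      omega
    obtain ⟨a, b, hu, hv, heq⟩ := rBaseRole_pos hne
    subst hu; subst hv
    exact Or.inl ⟨a, b, rfl, rfl, heq ▸ h2⟩

lemma created_of_lim_pos_left {R : Role} {u v : CanElem} {w : CanElem} {R₀ : Role} {j₀ : ℕ}
    (hu : u = CanElem.anon w R₀ j₀) (h : 1 ≤ (canInterp K).roleMult R u v) :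
    Created K u := by
  rw [roleMult_lim_eq_sup] at h
  have : ∃ i, 1 ≤ (canStage K i).toInterp.roleMult R u v := by
    by_contra hno
    push_neg at hno
    have : (⨆ i, (canStage K i).toInterp.roleMult R u v) = 0 := by
      refine le_antisymm (iSup_le fun i => ?_) (zero_le)
      exact (ENat.lt_one_iff_eq_zero.mp (hno i)).le
    rw [this] at h
    exact absurd h (by simp)
  obtain ⟨i, hi⟩ := this
  exact ⟨i, (roleMult_stage_pos_active hi).1⟩

end Statement15Lim
section Statement15Node

lemma exists_seq_in {α : Type*} [Nonempty α] (S : Set α) (D : ℕ∞) (hD : D ≤ S.encard) :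
    ∃ w : ℕ → α, (∀ j : ℕ, (j : ℕ∞) < D → w j ∈ S) ∧
      Set.InjOn w {j : ℕ | (j : ℕ∞) < D} := by
  classical
  cases D with
  | top =>
    have hinf : S.Infinite := Set.encard_eq_top_iff.mp (top_le_iff.mp hD)
    have emb := Set.Infinite.natEmbedding S hinf
    refine ⟨fun j => (emb j : α), fun j _ => (emb j).2, ?_⟩
    intro a _ b _ hab
    exact emb.injective (Subtype.coe_injective hab)
  | coe n =>
    obtain ⟨t, hts, htn⟩ := Set.exists_subset_encard_eq hD
    have hfin : t.Finite := Set.finite_of_encard_eq_coe htn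
    have hcard : hfin.toFinset.card = n := by
      rw [hfin.encard_eq_coe_toFinset_card] at htn
      exact_mod_cast htn
    have e : {x // x ∈ hfin.toFinset} ≃ Fin n := hfin.toFinset.equivFinOfCardEq hcard
    refine ⟨fun j => if h : j < n then (e.symm ⟨j, h⟩ : α) else Classical.arbitrary α, ?_, ?_⟩
    · intro j hj
      have hj' : j < n := by exact_mod_cast hj
      simp only [dif_pos hj']
      exact hts (hfin.mem_toFinset.mp (e.symm ⟨j, hj'⟩).2)
    · intro a ha b hb hab
      have ha' : a < n := by exact_mod_cast ha
      have hb' : b < n := by exact_mod_cast hb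
      simp only [dif_pos ha', dif_pos hb'] at hab
      have h2 := e.symm.injective (Subtype.coe_injective hab)
      exact congrArg Fin.val h2

variable (K : Ontology) (I : BagInterp)

/-- The enumerated successors of `d` via `R` in `I`. -/
def Eset (d : I.Δ) (R : Role) : Set (I.Δ × ℕ) :=
  {p | 1 ≤ p.2 ∧ (p.2 : ℕ∞) ≤ I.roleMult R d p.1}

lemma Eset_encard (d : I.Δ) (R : Role) :
    (Eset I d R).encard = I.conceptMult (DLConcept.ex R) d :=
  (bagSum_eq_encard _).symm

def dmaxOf (d : I.Δ) (Bs : Set (I.Δ × ℕ)) (R : Role) : ℕ∞ :=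
  (Eset I d R).encard - Bs.encard

def PickGood (d : I.Δ) (Bs : Set (I.Δ × ℕ)) (R : Role) (w : ℕ → I.Δ × ℕ) : Prop :=
  (∀ j : ℕ, (j : ℕ∞) < dmaxOf I d Bs R → w j ∈ Eset I d R \ Bs) ∧
  Set.InjOn w {j : ℕ | (j : ℕ∞) < dmaxOf I d Bs R}

noncomputable def pick (d : I.Δ) (Bs : Set (I.Δ × ℕ)) (R : Role) : ℕ → I.Δ × ℕ :=
  if H : ∃ w, PickGood I d Bs R w then H.choose
  else fun _ => (Classical.choice I.dne, 0)

lemma pick_good {d : I.Δ} {Bs : Set (I.Δ × ℕ)} {R : Role} (hsub : Bs ⊆ Eset I d R) :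
    PickGood I d Bs R (pick I d Bs R) := by
  have hle : dmaxOf I d Bs R ≤ (Eset I d R \ Bs).encard := by
    have h := Set.encard_diff_add_encard_of_subset hsub
    exact tsub_le_iff_right.mpr h.ge
  haveI : Nonempty I.Δ := I.dne
  obtain ⟨w, h1, h2⟩ := exists_seq_in (Eset I d R \ Bs) (dmaxOf I d Bs R) hle
  have hex : ∃ w, PickGood I d Bs R w := ⟨w, h1, h2⟩
  rw [pick, dif_pos hex]
  exact hex.choose_spec

/-- Data attached to a canonical element. -/
structure NodeData where
  img : I.Δ
  bs : Role → Set (I.Δ × ℕ)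
  psi : Role → ℕ → I.Δ × ℕ

/-- The image in `I` of the ABox successors of an individual. -/
def aboxB (a : Ind) (R : Role) : Set (I.Δ × ℕ) :=
  (fun p : Ind × ℕ => (I.indMap p.1, p.2)) ''
    {p : Ind × ℕ | 1 ≤ p.2 ∧ (p.2 : ℕ∞) ≤ aboxRoleN K R a p.1}

noncomputable def childBs (nd : NodeData I) (R₀ : Role) (j₀ : ℕ) : Role → Set (I.Δ × ℕ) :=
  open Classical in fun R =>
    if R = R₀.flip ∧ (j₀ : ℕ∞) < dmaxOf I nd.img (nd.bs R₀) R₀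
    then {(nd.img, (nd.psi R₀ j₀).2)} else ∅

/-- The recursive construction of images and witness enumerations. -/
noncomputable def node : CanElem → NodeData I
  | CanElem.ind a =>
      ⟨I.indMap a, fun R => aboxB K I a R, fun R => pick I (I.indMap a) (aboxB K I a R) R⟩
  | CanElem.anon w R₀ j₀ =>
      ⟨((node w).psi R₀ j₀).1, childBs I (node w) R₀ j₀,
        fun R => pick I ((node w).psi R₀ j₀).1 (childBs I (node w) R₀ j₀ R) R⟩

/-- The homomorphism on domain elements. -/
noncomputable def gmap (u : CanElem) : I.Δ := (node K I u).img

noncomputable def psiF (u : CanElem) (R : Role) : ℕ → I.Δ × ℕ := (node K I u).psi R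

noncomputable def bsF (u : CanElem) (R : Role) : Set (I.Δ × ℕ) := (node K I u).bs R

noncomputable def dmaxU (u : CanElem) (R : Role) : ℕ∞ :=
  dmaxOf I (gmap K I u) (bsF K I u R) R

lemma gmap_ind (a : Ind) : gmap K I (CanElem.ind a) = I.indMap a := rfl

lemma gmap_anon (w : CanElem) (R₀ : Role) (j₀ : ℕ) :
    gmap K I (CanElem.anon w R₀ j₀) = (psiF K I w R₀ j₀).1 := rfl

lemma bsF_ind (a : Ind) (R : Role) : bsF K I (CanElem.ind a) R = aboxB K I a R := rfl

open Classical in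
lemma bsF_anon (w : CanElem) (R₀ : Role) (j₀ : ℕ) (R : Role) :
    bsF K I (CanElem.anon w R₀ j₀) R =
      if R = R₀.flip ∧ (j₀ : ℕ∞) < dmaxU K I w R₀
      then {(gmap K I w, (psiF K I w R₀ j₀).2)} else ∅ := rfl

lemma psiF_eq (u : CanElem) (R : Role) :
    psiF K I u R = pick I (gmap K I u) (bsF K I u R) R := by
  cases u <;> rfl

variable {K I}

lemma abox_le_model (hI : I.IsModel K) (R : Role) (a b : Ind) :
    aboxRoleN K R a b ≤ I.roleMult R (I.indMap a) (I.indMap b) := by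
  cases R with
  | atomic P => exact hI.2 (Assertion.roleA P a b)
  | inv P => exact hI.2 (Assertion.roleA P b a)

lemma node_sound (hI : I.IsModel K) :
    ∀ u R, bsF K I u R ⊆ Eset I (gmap K I u) R := by
  intro u
  induction u with
  | ind a =>
    intro R p hp
    obtain ⟨⟨b, m⟩, ⟨h1, h2⟩, rfl⟩ := hp
    exact ⟨h1, h2.trans (abox_le_model hI R a b)⟩
  | anon w R₀ j₀ ih =>
    intro R p hp
    rw [bsF_anon] at hp
    split_ifs at hp with hcond
    · obtain ⟨hR, hlt⟩ := hcond
      subst hR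
      cases hp
      have hg : PickGood I (gmap K I w) (bsF K I w R₀) R₀ (psiF K I w R₀) := by
        rw [psiF_eq]
        exact pick_good I (fun p hp => ih R₀ hp)
      have hmem := (hg.1 j₀ hlt).1
      refine ⟨hmem.1, ?_⟩
      rw [I.roleMult_flip]
      exact hmem.2
    · exact absurd hp (Set.notMem_empty p)

lemma psiF_good (hI : I.IsModel K) (u : CanElem) (R : Role) :
    PickGood I (gmap K I u) (bsF K I u R) R (psiF K I u R) := by
  rw [psiF_eq]
  exact pick_good I (node_sound hI u R)

lemma stage0_roleMult (R : Role) (u v : CanElem) :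
    (canStage K 0).toInterp.roleMult R u v = rBaseRole K R u v := by
  classical
  rw [roleMult_stage_char, if_neg, add_zero]
  rintro (⟨j, hj, hact⟩ | ⟨j, hj, hact⟩) <;> exact anon_not_active0 (hj ▸ hact)

open Classical in
lemma roleMult_stage_mono {i i' : ℕ} (h : i ≤ i') (R : Role) (u v : CanElem) :
    (canStage K i).toInterp.roleMult R u v ≤ (canStage K i').toInterp.roleMult R u v := by
  rw [roleMult_stage_char, roleMult_stage_char]
  apply add_le_add le_rfl
  split_ifs with h1 h2
  · exact le_rfl
  · exfalso
    apply h2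
    rcases h1 with ⟨j, hj, hact⟩ | ⟨j, hj, hact⟩
    · exact Or.inl ⟨j, hj, active_le h hact⟩
    · exact Or.inr ⟨j, hj, active_le h hact⟩
  · exact zero_le
  · exact le_rfl

lemma encard_aboxB (a : Ind) (R : Role) :
    (aboxB K I a R).encard =
      (canStage K 0).toInterp.conceptMult (DLConcept.ex R) (CanElem.ind a) := by
  show _ = bagSum _
  rw [bagSum_eq_encard]
  have hinj1 : Function.Injective (fun p : Ind × ℕ => (I.indMap p.1, p.2)) := by
    rintro ⟨b, m⟩ ⟨b', m'⟩ h
    have h1 := I.indInj (congrArg Prod.fst h)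
    have h2 : m = m' := congrArg Prod.snd h
    cases h1; cases h2; rfl
  have hinj2 : Function.Injective (fun p : Ind × ℕ => (CanElem.ind p.1, p.2)) := by
    rintro ⟨b, m⟩ ⟨b', m'⟩ h
    have h1 : CanElem.ind b = CanElem.ind b' := congrArg Prod.fst h
    have h2 : m = m' := congrArg Prod.snd h
    cases h1; cases h2; rfl
  have h2 : copiesOf (fun v => (canStage K 0).toInterp.roleMult R (CanElem.ind a) v)
      = (fun p : Ind × ℕ => (CanElem.ind p.1, p.2)) ''
          {p : Ind × ℕ | 1 ≤ p.2 ∧ (p.2 : ℕ∞) ≤ aboxRoleN K R a p.1} := by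
    ext ⟨v, m⟩
    constructor
    · rintro ⟨hm1, hm2⟩
      dsimp only at hm2
      erw [stage0_roleMult] at hm2
      cases v with
      | ind b => exact ⟨(b, m), ⟨hm1, hm2⟩, rfl⟩
      | anon w R' j' =>
        rw [rBaseRole_anon_right] at hm2
        have : (m : ℕ∞) = 0 := le_antisymm hm2 (zero_le)
        simp at this
        omega
    · rintro ⟨⟨b, m'⟩, ⟨hb1, hb2⟩, heq⟩
      cases heq
      refine ⟨hb1, ?_⟩
      dsimp only
      rw [stage0_roleMult]
      exact hb2
  erw [h2, hinj2.encard_image]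
  show (_ '' _).encard = _
  rw [hinj1.encard_image]

lemma base_le {i : ℕ} {u : CanElem} (hI : I.IsModel K) (R : Role) (hact : u ∈ ActiveAt K i) :
    (bsF K I u R).encard ≤ (canStage K i).toInterp.conceptMult (DLConcept.ex R) u := by
  classical
  cases u with
  | ind a =>
    rw [bsF_ind, encard_aboxB]
    exact bagSum_le_of_le (fun v => roleMult_stage_mono (Nat.zero_le i) R _ v)
  | anon w R₀ j₀ =>
    rw [bsF_anon]
    split_ifs with hcond
    · rw [Set.encard_singleton]
      obtain ⟨hR, _⟩ := hcond
      subst hR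
      have hedge : (canStage K i).toInterp.roleMult R₀.flip (CanElem.anon w R₀ j₀) w = 1 := by
        rw [roleMult_stage_char, if_pos (Or.inr ⟨j₀, by rw [Role.flip_flip], hact⟩),
          rBaseRole_anon_left, zero_add]
      calc (1 : ℕ∞) = _ := hedge.symm
        _ ≤ _ := le_bagSum _ w
    · simp

lemma ccl_le {i : ℕ} {u : CanElem} (hcore : TBox.IsCore K.tbox) (hI : I.IsModel K)
    (C : DLConcept)
    (hm : ∀ C₀, (canStage K i).toInterp.conceptMult C₀ u ≤ I.conceptMult C₀ (gmap K I u)) :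
    (canStage K i).ccl K.tbox u C ≤ I.conceptMult C (gmap K I u) := by
  refine iSup_le ?_
  rintro ⟨C₀, hC₀⟩
  exact (hm C₀).trans (entails_mono hcore hI.1 hC₀ (gmap K I u))

lemma delta_le_dmax {i : ℕ} {u : CanElem} (hcore : TBox.IsCore K.tbox) (hI : I.IsModel K)
    (R : Role) (hact : u ∈ ActiveAt K i)
    (hm : ∀ C₀, (canStage K i).toInterp.conceptMult C₀ u ≤ I.conceptMult C₀ (gmap K I u)) :
    (canStage K i).delta K.tbox u R ≤ dmaxU K I u R := by
  refine tsub_le_tsub ?_ (base_le hI R hact)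
  rw [Eset_encard]
  exact ccl_le hcore hI _ hm

lemma countl_stage {i : ℕ} {u : CanElem} {R : Role} {j : ℕ}
    (hcore : TBox.IsCore K.tbox) (hI : I.IsModel K)
    (h : CanElem.anon u R j ∈ ActiveAt K i)
    (hm : ∀ k, k < i → ∀ C₀,
      (canStage K k).toInterp.conceptMult C₀ u ≤ I.conceptMult C₀ (gmap K I u)) :
    (j : ℕ∞) < dmaxU K I u R := by
  obtain ⟨k, hki, hu, hlt⟩ := active_anon_exists h
  exact hlt.trans_le (delta_le_dmax hcore hI R hu (hm k hki))

end Statement15Node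
section Statement15Sigma

variable (K : Ontology) (I : BagInterp)

open Classical in
/-- The image of an enumerated role successor. -/
noncomputable def sigma (u : CanElem) (R : Role) (v : CanElem) (m : ℕ) : I.Δ × ℕ :=
  if h : ∃ j, v = CanElem.anon u R j then psiF K I u R h.choose
  else
    match u with
    | CanElem.anon w R₀ j₀ =>
        if v = w ∧ R = R₀.flip then (gmap K I w, (psiF K I w R₀ j₀).2)
        else (gmap K I v, m)
    | CanElem.ind _ => (gmap K I v, m)

lemma sigma_child (u : CanElem) (R : Role) (j m : ℕ) :
    sigma K I u R (CanElem.anon u R j) m = psiF K I u R j := by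
  have hex : ∃ j', (CanElem.anon u R j : CanElem) = CanElem.anon u R j' := ⟨j, rfl⟩
  rw [sigma, dif_pos hex]
  have hsp := hex.choose_spec
  injection hsp with _ _ h3
  exact (congrArg (psiF K I u R) h3).symm

lemma sigma_nonchild_ind (a : Ind) (R : Role) (v : CanElem) (m : ℕ)
    (h : ¬ ∃ j, v = CanElem.anon (CanElem.ind a) R j) :
    sigma K I (CanElem.ind a) R v m = (gmap K I v, m) := by
  rw [sigma, dif_neg h]

lemma sigma_nonchild_anon (w : CanElem) (R₀ : Role) (j₀ : ℕ) (R : Role) (v : CanElem) (m : ℕ)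
    (h : ¬ ∃ j, v = CanElem.anon (CanElem.anon w R₀ j₀) R j) :
    sigma K I (CanElem.anon w R₀ j₀) R v m =
      if v = w ∧ R = R₀.flip then (gmap K I w, (psiF K I w R₀ j₀).2)
      else (gmap K I v, m) := by
  rw [sigma, dif_neg h]

lemma sigma_fst (u : CanElem) (R : Role) (v : CanElem) (m : ℕ) :
    (sigma K I u R v m).1 = gmap K I v := by
  classical
  by_cases h : ∃ j, v = CanElem.anon u R j
  · obtain ⟨j, rfl⟩ := h
    rw [sigma_child]
    rfl
  · cases u with
    | ind a => rw [sigma_nonchild_ind K I a R v m h]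
    | anon w R₀ j₀ =>
      rw [sigma_nonchild_anon K I w R₀ j₀ R v m h]
      split_ifs with hc
      · rw [hc.1]
      · rfl

variable {K I}

lemma sigma_mem (hI : I.IsModel K) {u : CanElem} {R : Role} {v : CanElem} {m : ℕ}
    (h1 : 1 ≤ m) (h2 : (m : ℕ∞) ≤ (canInterp K).roleMult R u v)
    (Hc : ∀ j, v = CanElem.anon u R j → (j : ℕ∞) < dmaxU K I u R)
    (Hp : ∀ w R₀ j, u = CanElem.anon w R₀ j → (j : ℕ∞) < dmaxU K I w R₀) :
    sigma K I u R v m ∈ Eset I (gmap K I u) R := by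
  rcases succ_cases_lim h1 h2 with ⟨a, b, hu, hv, hle⟩ | ⟨j, hj, hcr, hm1⟩ | ⟨j, hj, hcr, hm1⟩
  · subst hu; subst hv
    have hnc : ¬ ∃ j, (CanElem.ind b : CanElem) = CanElem.anon (CanElem.ind a) R j := by
      rintro ⟨j, hj⟩; cases hj
    rw [sigma_nonchild_ind K I a R _ m hnc]
    exact ⟨h1, hle.trans (abox_le_model hI R a b)⟩
  · subst hj; subst hm1
    rw [sigma_child]
    exact ((psiF_good hI u R).1 j (Hc j rfl)).1
  · subst hj; subst hm1
    have hnc : ¬ ∃ j', v = CanElem.anon (CanElem.anon v R.flip j) R j' := by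
      rintro ⟨j', hj'⟩
      exact parent_not_child rfl hj'
    rw [sigma_nonchild_anon K I v R.flip j R v 1 hnc,
      if_pos ⟨rfl, (Role.flip_flip R).symm⟩]
    have hg := ((psiF_good hI v R.flip).1 j (Hp v R.flip j rfl)).1
    refine ⟨hg.1, ?_⟩
    have h3 := hg.2
    rw [show ((psiF K I v R.flip j).1) = gmap K I (CanElem.anon v R.flip j) from rfl,
      ← I.roleMult_flip R.flip, Role.flip_flip] at h3
    exact h3

lemma sigma_inj (hI : I.IsModel K) {u : CanElem} {R : Role} {v₁ v₂ : CanElem} {m₁ m₂ : ℕ}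
    (ha1 : 1 ≤ m₁) (ha2 : (m₁ : ℕ∞) ≤ (canInterp K).roleMult R u v₁)
    (hb1 : 1 ≤ m₂) (hb2 : (m₂ : ℕ∞) ≤ (canInterp K).roleMult R u v₂)
    (Hc1 : ∀ j, v₁ = CanElem.anon u R j → (j : ℕ∞) < dmaxU K I u R)
    (Hc2 : ∀ j, v₂ = CanElem.anon u R j → (j : ℕ∞) < dmaxU K I u R)
    (Hp : ∀ w R₀ j, u = CanElem.anon w R₀ j → (j : ℕ∞) < dmaxU K I w R₀)
    (heq : sigma K I u R v₁ m₁ = sigma K I u R v₂ m₂) : v₁ = v₂ ∧ m₁ = m₂ := by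
  classical
  have hval : ∀ (v : CanElem) (m : ℕ) (a b : Ind), u = CanElem.ind a → v = CanElem.ind b →
      (m : ℕ∞) ≤ aboxRoleN K R a b → 1 ≤ m →
      sigma K I u R v m = (I.indMap b, m) ∧ sigma K I u R v m ∈ bsF K I u R := by
    intro v m a b hu hv hle h1
    subst hu; subst hv
    have hnc : ¬ ∃ j, (CanElem.ind b : CanElem) = CanElem.anon (CanElem.ind a) R j := by
      rintro ⟨j, hj⟩; cases hj
    rw [sigma_nonchild_ind K I a R _ m hnc]
    exact ⟨rfl, ⟨(b, m), ⟨h1, hle⟩, rfl⟩⟩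
  have hpar : ∀ (v : CanElem) (m : ℕ) (j : ℕ), u = CanElem.anon v R.flip j →
      sigma K I u R v m = (gmap K I v, (psiF K I v R.flip j).2) ∧
        sigma K I u R v m ∈ bsF K I u R := by
    intro v m j hu
    subst hu
    have hnc : ¬ ∃ j', v = CanElem.anon (CanElem.anon v R.flip j) R j' := by
      rintro ⟨j', hj'⟩
      exact parent_not_child rfl hj'
    rw [sigma_nonchild_anon K I v R.flip j R v m hnc,
      if_pos ⟨rfl, (Role.flip_flip R).symm⟩]
    refine ⟨rfl, ?_⟩
    rw [bsF_anon, if_pos ⟨(Role.flip_flip R).symm, Hp v R.flip j rfl⟩]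
    exact rfl
  have hchild : ∀ (v : CanElem) (m : ℕ) (j : ℕ), v = CanElem.anon u R j →
      (j : ℕ∞) < dmaxU K I u R →
      sigma K I u R v m = psiF K I u R j ∧
        sigma K I u R v m ∈ Eset I (gmap K I u) R \ bsF K I u R := by
    intro v m j hv hlt
    subst hv
    rw [sigma_child]
    exact ⟨rfl, (psiF_good hI u R).1 j hlt⟩
  rcases succ_cases_lim ha1 ha2 with ⟨a, b, hu, hv, hle⟩ | ⟨j, hj, hcr, hm1⟩ | ⟨j, hj, hcr, hm1⟩ <;>
    rcases succ_cases_lim hb1 hb2 with ⟨a', b', hu', hv', hle'⟩ | ⟨j', hj', hcr', hm1'⟩ |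
      ⟨j', hj', hcr', hm1'⟩
  · -- base / base
    obtain ⟨he1, _⟩ := hval v₁ m₁ a b hu hv hle ha1
    obtain ⟨he2, _⟩ := hval v₂ m₂ a' b' hu' hv' hle' hb1
    rw [he1, he2] at heq
    have hab : a = a' := by rw [hu] at hu'; injection hu'
    have hbb : b = b' := I.indInj (congrArg Prod.fst heq)
    refine ⟨by rw [hv, hv', hbb], congrArg Prod.snd heq⟩
  · -- base / child
    obtain ⟨_, hB⟩ := hval v₁ m₁ a b hu hv hle ha1
    obtain ⟨_, hC⟩ := hchild v₂ m₂ j' hj' (Hc2 j' hj')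
    exact absurd (heq ▸ hB) hC.2
  · -- base / parent
    exfalso
    rw [hu] at hj'
    cases hj'
  · -- child / base
    obtain ⟨_, hC⟩ := hchild v₁ m₁ j hj (Hc1 j hj)
    obtain ⟨_, hB⟩ := hval v₂ m₂ a' b' hu' hv' hle' hb1
    exact absurd (heq.symm ▸ hB) hC.2
  · -- child / child
    obtain ⟨he1, _⟩ := hchild v₁ m₁ j hj (Hc1 j hj)
    obtain ⟨he2, _⟩ := hchild v₂ m₂ j' hj' (Hc2 j' hj')
    rw [he1, he2] at heq
    have hjj : j = j' := (psiF_good hI u R).2 (Hc1 j hj) (Hc2 j' hj') heq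
    exact ⟨by rw [hj, hj', hjj], by omega⟩
  · -- child / parent
    obtain ⟨_, hC⟩ := hchild v₁ m₁ j hj (Hc1 j hj)
    obtain ⟨_, hP⟩ := hpar v₂ m₂ j' hj'
    exact absurd (heq ▸ hP) hC.2
  · -- parent / base
    exfalso
    rw [hu'] at hj
    cases hj
  · -- parent / child
    obtain ⟨_, hP⟩ := hpar v₁ m₁ j hj
    obtain ⟨_, hC⟩ := hchild v₂ m₂ j' hj' (Hc2 j' hj')
    exact absurd (heq.symm ▸ hP) hC.2
  · -- parent / parent
    rw [hj] at hj'
    injection hj' with hv _ _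
    exact ⟨hv, by omega⟩

end Statement15Sigma
section Statement15Master

variable {K : Ontology} {I : BagInterp}

theorem master (hcore : TBox.IsCore K.tbox) (hI : I.IsModel K) :
    ∀ i u C, (canStage K i).toInterp.conceptMult C u ≤ I.conceptMult C (gmap K I u) := by
  intro i
  induction i using Nat.strong_induction_on with
  | _ i IH =>
    intro u C
    cases C with
    | atomic A =>
      show (canStage K i).c A u ≤ I.cI A (gmap K I u)
      cases i with
      | zero =>
        cases u with
        | ind a => exact hI.2 (Assertion.conceptA A a)
        | anon w R j =>
          rw [c_zero_not_active anon_not_active0 A]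
          exact zero_le
      | succ k =>
        by_cases hu : u ∈ ActiveAt K k
        · rw [c_succ_active hu]
          exact ccl_le hcore hI _ (fun C₀ => IH k (Nat.lt_succ_self k) u C₀)
        · rw [show (canStage K (k + 1)).c A u = 0 from if_neg hu]
          exact zero_le
    | ex R =>
      show bagSum _ ≤ bagSum _
      rw [bagSum_eq_encard, bagSum_eq_encard]
      have hmap : ∀ p ∈ copiesOf (fun v => (canStage K i).toInterp.roleMult R u v),
          sigma K I u R p.1 p.2 ∈ Eset I (gmap K I u) R := by
        rintro ⟨v, m⟩ ⟨hm1, hm2⟩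
        dsimp only at hm1 hm2
        have hpos : 1 ≤ (canStage K i).toInterp.roleMult R u v :=
          le_trans (by exact_mod_cast hm1) hm2
        have hlim : (m : ℕ∞) ≤ (canInterp K).roleMult R u v :=
          hm2.trans (stage_le_lim i R u v)
        apply sigma_mem hI hm1 hlim
        · intro j hj
          have hact : CanElem.anon u R j ∈ ActiveAt K i :=
            hj ▸ (roleMult_stage_pos_active hpos).2
          exact countl_stage hcore hI hact (fun k hk C₀ => IH k hk u C₀)
        · intro w R₀ j hj
          have hact : CanElem.anon w R₀ j ∈ ActiveAt K i :=
            hj ▸ (roleMult_stage_pos_active hpos).1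
          exact countl_stage hcore hI hact (fun k hk C₀ => IH k hk w C₀)
      have hinj : Set.InjOn (fun p : CanElem × ℕ => sigma K I u R p.1 p.2)
          (copiesOf (fun v => (canStage K i).toInterp.roleMult R u v)) := by
        rintro ⟨v₁, m₁⟩ ⟨hp1, hp2⟩ ⟨v₂, m₂⟩ ⟨hq1, hq2⟩ heq
        dsimp only at hp1 hp2 hq1 hq2 heq
        have hposa : 1 ≤ (canStage K i).toInterp.roleMult R u v₁ :=
          le_trans (by exact_mod_cast hp1) hp2
        have hposb : 1 ≤ (canStage K i).toInterp.roleMult R u v₂ :=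
          le_trans (by exact_mod_cast hq1) hq2
        have hres := sigma_inj hI hp1 (hp2.trans (stage_le_lim i R u v₁))
          hq1 (hq2.trans (stage_le_lim i R u v₂))
          (fun j hj => countl_stage hcore hI
            (hj ▸ (roleMult_stage_pos_active hposa).2) (fun k hk C₀ => IH k hk u C₀))
          (fun j hj => countl_stage hcore hI
            (hj ▸ (roleMult_stage_pos_active hposb).2) (fun k hk C₀ => IH k hk u C₀))
          (fun w R₀ j hj => countl_stage hcore hI
            (hj ▸ (roleMult_stage_pos_active hposa).1) (fun k hk C₀ => IH k hk w C₀))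
          heq
        rw [Prod.mk.injEq]
        exact hres
      calc (copiesOf (fun v => (canStage K i).toInterp.roleMult R u v)).encard
          = ((fun p : CanElem × ℕ => sigma K I u R p.1 p.2) ''
              copiesOf (fun v => (canStage K i).toInterp.roleMult R u v)).encard :=
            (hinj.encard_image).symm
        _ ≤ _ := Set.encard_mono (by rintro q ⟨p, hp, rfl⟩; exact hmap p hp)

lemma countl (hcore : TBox.IsCore K.tbox) (hI : I.IsModel K) {u : CanElem} {R : Role} {j : ℕ}
    (h : Created K (CanElem.anon u R j)) : (j : ℕ∞) < dmaxU K I u R := by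
  obtain ⟨i, hi⟩ := h
  exact countl_stage hcore hI hi (fun k _ C₀ => master hcore hI k u C₀)

lemma hc_lim (hcore : TBox.IsCore K.tbox) (hI : I.IsModel K) {u : CanElem} {R : Role}
    {v : CanElem} {m : ℕ} (h1 : 1 ≤ m) (h2 : (m : ℕ∞) ≤ (canInterp K).roleMult R u v) :
    ∀ j, v = CanElem.anon u R j → (j : ℕ∞) < dmaxU K I u R := by
  intro j hj
  rcases succ_cases_lim h1 h2 with ⟨a, b, hu, hv, _⟩ | ⟨j', hj', hcr, _⟩ | ⟨j', hj', _, _⟩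
  · rw [hv] at hj; cases hj
  · rw [hj'] at hj
    injection hj with _ _ h3
    subst h3
    exact countl hcore hI (hj' ▸ hcr)
  · exact absurd hj (parent_not_child hj')

lemma hp_lim (hcore : TBox.IsCore K.tbox) (hI : I.IsModel K) {u : CanElem} {R : Role}
    {v : CanElem} {m : ℕ} (h1 : 1 ≤ m) (h2 : (m : ℕ∞) ≤ (canInterp K).roleMult R u v) :
    ∀ w R₀ j, u = CanElem.anon w R₀ j → (j : ℕ∞) < dmaxU K I w R₀ := by
  intro w R₀ j hj
  have hcr : Created K u := created_of_lim_pos_left hj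
    (le_trans (by exact_mod_cast h1) h2)
  exact countl hcore hI (hj ▸ hcr)

end Statement15Master
section Statement15Final

variable {K : Ontology} {I : BagInterp}

lemma sigma_flip (v u : CanElem) (P : AtomicRole) (m : ℕ) :
    (sigma K I v (Role.atomic P) u m).2 = (sigma K I u (Role.inv P) v m).2 := by
  classical
  by_cases h1 : ∃ j, u = CanElem.anon v (Role.atomic P) j
  · obtain ⟨j, rfl⟩ := h1
    rw [sigma_child]
    have hnc : ¬ ∃ j', v = CanElem.anon (CanElem.anon v (Role.atomic P) j) (Role.inv P) j' := by
      rintro ⟨j', hj'⟩; exact parent_not_child rfl hj'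
    rw [sigma_nonchild_anon K I v (Role.atomic P) j (Role.inv P) v m hnc, if_pos ⟨rfl, rfl⟩]
  · by_cases h2 : ∃ j, v = CanElem.anon u (Role.inv P) j
    · obtain ⟨j, rfl⟩ := h2
      have hnc : ¬ ∃ j', u = CanElem.anon (CanElem.anon u (Role.inv P) j) (Role.atomic P) j' := by
        rintro ⟨j', hj'⟩; exact parent_not_child rfl hj'
      rw [sigma_nonchild_anon K I u (Role.inv P) j (Role.atomic P) u m hnc, if_pos ⟨rfl, rfl⟩,
        sigma_child]
    · have hL : (sigma K I v (Role.atomic P) u m).2 = m := by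
        rw [sigma, dif_neg h1]
        cases v with
        | ind a => rfl
        | anon w R₀ j₀ =>
          dsimp only
          have hneg : ¬ (u = w ∧ Role.atomic P = R₀.flip) := by
            rintro ⟨rfl, hR⟩
            cases R₀ with
            | atomic Q => simp [Role.flip] at hR
            | inv Q =>
              simp only [Role.flip] at hR
              injection hR with hq
              exact h2 ⟨j₀, by rw [hq]⟩
          rw [if_neg hneg]
      have hRr : (sigma K I u (Role.inv P) v m).2 = m := by
        rw [sigma, dif_neg h2]
        cases u with
        | ind a => rfl
        | anon w R₀ j₀ =>
          dsimp only
          have hneg : ¬ (v = w ∧ Role.inv P = R₀.flip) := by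
            rintro ⟨rfl, hR⟩
            cases R₀ with
            | inv Q => simp [Role.flip] at hR
            | atomic Q =>
              simp only [Role.flip] at hR
              injection hR with hq
              exact h1 ⟨j₀, by rw [hq]⟩
          rw [if_neg hneg]
      rw [hL, hRr]

noncomputable def theHom (hcore : TBox.IsCore K.tbox) (hI : I.IsModel K) :
    EHom (canInterp K) I where
  h := gmap K I
  hInd := fun a => rfl
  hC := fun A x => ⟨(gmap K I x.1.1, x.1.2), x.2.1,
    x.2.2.trans (iSup_le fun i => master hcore hI i x.1.1 (DLConcept.atomic A))⟩
  hC_fst := fun A x => rfl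
  hR := fun P x =>
    ⟨((gmap K I x.1.1.1, gmap K I x.1.1.2),
      (sigma K I x.1.1.1 (Role.atomic P) x.1.1.2 x.1.2).2),
      by
        have hb : ((x.1.2 : ℕ∞)) ≤ (canInterp K).roleMult (Role.atomic P) x.1.1.1 x.1.1.2 :=
          x.2.2
        have hmem := sigma_mem hI x.2.1 hb (hc_lim hcore hI x.2.1 hb)
          (hp_lim hcore hI x.2.1 hb)
        refine ⟨hmem.1, ?_⟩
        have h2 := hmem.2
        erw [sigma_fst] at h2
        exact h2⟩
  hR_fst := fun P x => rfl

theorem theHom_predInj (hcore : TBox.IsCore K.tbox) (hI : I.IsModel K) :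
    (theHom hcore hI).PredInj := by
  intro u _hu
  refine ⟨?_, ?_, ?_⟩
  · rintro A ⟨⟨u₁, m₁⟩, hm1, hm2⟩ ⟨⟨u₂, m₂⟩, hn1, hn2⟩ hx hy hne himg
    dsimp only at hx hy hne
    apply hne
    have hval : ((gmap K I u₁, m₁) : I.Δ × ℕ) = (gmap K I u₂, m₂) :=
      congrArg Subtype.val himg
    exact congrArg Prod.snd hval
  · rintro P ⟨⟨⟨u₁, w₁⟩, m₁⟩, hm1, hm2⟩ ⟨⟨⟨u₂, w₂⟩, m₂⟩, hn1, hn2⟩ hx hy hne himg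
    dsimp only at hx hy hne hm1 hm2 hn1 hn2
    apply hne
    have hval : (((gmap K I u₁, gmap K I w₁),
          (sigma K I u₁ (Role.atomic P) w₁ m₁).2) : (I.Δ × I.Δ) × ℕ) =
        ((gmap K I u₂, gmap K I w₂), (sigma K I u₂ (Role.atomic P) w₂ m₂).2) :=
      congrArg Subtype.val himg
    rw [hx] at hval hm2
    rw [hy] at hval hn2
    have hfst : gmap K I w₁ = gmap K I w₂ :=
      congrArg (fun z : (I.Δ × I.Δ) × ℕ => z.1.2) hval
    have hsnd : (sigma K I u (Role.atomic P) w₁ m₁).2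
        = (sigma K I u (Role.atomic P) w₂ m₂).2 :=
      congrArg (fun z : (I.Δ × I.Δ) × ℕ => z.2) hval
    have hsig : sigma K I u (Role.atomic P) w₁ m₁ = sigma K I u (Role.atomic P) w₂ m₂ := by
      rw [Prod.ext_iff]
      exact ⟨by erw [sigma_fst, sigma_fst]; exact hfst, hsnd⟩
    have hm2' : (m₁ : ℕ∞) ≤ (canInterp K).roleMult (Role.atomic P) u w₁ := hm2
    have hn2' : (m₂ : ℕ∞) ≤ (canInterp K).roleMult (Role.atomic P) u w₂ := hn2
    have hres := sigma_inj hI hm1 hm2' hn1 hn2' (hc_lim hcore hI hm1 hm2')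
      (hc_lim hcore hI hn1 hn2') (hp_lim hcore hI hm1 hm2') hsig
    rw [Prod.mk.injEq]
    exact hres
  · rintro P ⟨⟨⟨w₁, u₁⟩, m₁⟩, hm1, hm2⟩ ⟨⟨⟨w₂, u₂⟩, m₂⟩, hn1, hn2⟩ hx hy hne himg
    dsimp only at hx hy hne hm1 hm2 hn1 hn2
    apply hne
    have hval : (((gmap K I w₁, gmap K I u₁),
          (sigma K I w₁ (Role.atomic P) u₁ m₁).2) : (I.Δ × I.Δ) × ℕ) =
        ((gmap K I w₂, gmap K I u₂), (sigma K I w₂ (Role.atomic P) u₂ m₂).2) :=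
      congrArg Subtype.val himg
    rw [hx] at hval hm2
    rw [hy] at hval hn2
    have hfst : gmap K I w₁ = gmap K I w₂ :=
      congrArg (fun z : (I.Δ × I.Δ) × ℕ => z.1.1) hval
    have hsnd : (sigma K I w₁ (Role.atomic P) u m₁).2
        = (sigma K I w₂ (Role.atomic P) u m₂).2 :=
      congrArg (fun z : (I.Δ × I.Δ) × ℕ => z.2) hval
    rw [sigma_flip w₁ u P m₁, sigma_flip w₂ u P m₂] at hsnd
    have hm2' : (m₁ : ℕ∞) ≤ (canInterp K).roleMult (Role.inv P) u w₁ := hm2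
    have hn2' : (m₂ : ℕ∞) ≤ (canInterp K).roleMult (Role.inv P) u w₂ := hn2
    have hsig : sigma K I u (Role.inv P) w₁ m₁ = sigma K I u (Role.inv P) w₂ m₂ := by
      rw [Prod.ext_iff]
      exact ⟨by erw [sigma_fst, sigma_fst]; exact hfst, hsnd⟩
    have hres := sigma_inj hI hm1 hm2' hn1 hn2' (hc_lim hcore hI hm1 hm2')
      (hc_lim hcore hI hn1 hn2') (hp_lim hcore hI hm1 hm2') hsig
    rw [Prod.mk.injEq]
    exact hres

end Statement15Final
/-- For any DL-Lite_core^bag ontology `K` and any bag model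
`I` of `K`, there exists an e-homomorphism from the enumerated canonical bag
model `C(K)^e` to `I^e` that is predicate-injective on individuals. -/
theorem statement_15 (K : Ontology) (hcore : TBox.IsCore K.tbox)
    (I : BagInterp) (hI : I.IsModel K) :
    ∃ e : EHom (canInterp K) I, e.PredInj :=
  ⟨theHom hcore hI, theHom_predInj hcore hI⟩
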